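/- Let m ≥ 2, n ≥ 1 and let Δ ⊂ ℝ^{m+n} be the root system of osp(2m|2n). Define the three subsets: P(m) := L(m) ∪ N⁺(m) with L(m) := {ε_i − ε_j : i ≠ j} ∪ {δ_k − δ_l : k ≠ l} ∪ {±(ε_i − δ_k) : all i, k} and N⁺(m) := {ε_i + ε_j : i ≠ j} ∪ {δ_k + δ_l : k ≠ l} ∪ {2δ_k : all k} ∪ {ε_i + δ_k : all i, k}; P(1) := L(1) ∪ N⁺(1) with L(1) := {±ε_i ± ε_j : 2 ≤ i < j ≤ m} ∪ {±δ_k ± δ_l : k ≠ l} ∪ {±2δ_k : all k} ∪ {±ε_i ± δ_k : i ≥ 2} and N⁺(1) := {ε₁ ± ε_j : j ≥ 2} ∪ {ε₁ ± δ_k : all k}; and P̄(m) := θ(P(m)), where θ is the linear map sending ε_m ↦ −ε_m and fixing all other basis vectors. Then a subset P ⊆ Δ is a cominuscule parabolic set of roots of Δ if and only if w(P) ∈ {P(m), P(1), P̄(m)} for some w ∈ W; each of P(m), P(1), P̄(m) is itself a cominuscule parabolic set of roots, and no two of them lie in the same W-orbit. -/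

import Mathlib

open Pointwise

/-- A proper subset `P` of a symmetric root set `Δ` is a parabolic set of roots if
`Δ = P ∪ (-P)` and `P` is closed under sums lying in `Δ`. -/
def IsParabolic {V : Type*} [AddCommGroup V] (Δ P : Set V) : Prop :=
  P ⊂ Δ ∧ Δ = P ∪ (-P) ∧ ∀ α ∈ P, ∀ β ∈ P, α + β ∈ Δ → α + β ∈ P

/-- A parabolic set of roots is cominuscule if the sum of any two elements of its
nilradical `N⁺ = P \ (-P)` is not a root. -/
def IsCominuscule {V : Type*} [AddCommGroup V] (Δ P : Set V) : Prop :=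
  IsParabolic Δ P ∧ ∀ α ∈ P \ (-P), ∀ β ∈ P \ (-P), α + β ∉ Δ

namespace OspEven

variable {m n : ℕ}

/-- `ℝ^{m+n}`, with coordinates indexed by `Fin m ⊕ Fin n`. -/
abbrev V (m n : ℕ) := (Fin m ⊕ Fin n) → ℝ

noncomputable def ε (i : Fin m) : V m n := Pi.single (Sum.inl i) 1

noncomputable def δ (k : Fin n) : V m n := Pi.single (Sum.inr k) 1

/-- The root system of `osp(2m|2n)`. -/
noncomputable def Δroot (m n : ℕ) : Set (V m n) :=
  {v | ∃ i j : Fin m, i ≠ j ∧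
      (v = ε i + ε j ∨ v = ε i - ε j ∨ v = -ε i + ε j ∨ v = -ε i - ε j)} ∪
  {v | ∃ k l : Fin n, k ≠ l ∧
      (v = δ k + δ l ∨ v = δ k - δ l ∨ v = -δ k + δ l ∨ v = -δ k - δ l)} ∪
  {v | ∃ k : Fin n, v = (2 : ℝ) • δ k ∨ v = -((2 : ℝ) • δ k)} ∪
  {v | ∃ (i : Fin m) (k : Fin n),
      v = ε i + δ k ∨ v = ε i - δ k ∨ v = -ε i + δ k ∨ v = -ε i - δ k}

/-- `P(m) = L(m) ⊔ N⁺(m)`. -/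
noncomputable def Pm (m n : ℕ) : Set (V m n) :=
  -- L(m)
  ({v | ∃ i j : Fin m, i ≠ j ∧ v = ε i - ε j} ∪
   {v | ∃ k l : Fin n, k ≠ l ∧ v = δ k - δ l} ∪
   {v | ∃ (i : Fin m) (k : Fin n), v = ε i - δ k ∨ v = δ k - ε i}) ∪
  -- N⁺(m)
  ({v | ∃ i j : Fin m, i ≠ j ∧ v = ε i + ε j} ∪
   {v | ∃ k l : Fin n, k ≠ l ∧ v = δ k + δ l} ∪
   {v | ∃ k : Fin n, v = (2 : ℝ) • δ k} ∪
   {v | ∃ (i : Fin m) (k : Fin n), v = ε i + δ k})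

/-- `P(1) = L(1) ⊔ N⁺(1)` (1-based `2 ≤ i < j` becomes 0-based `1 ≤ i`, `i < j`;
`ε₁` is the basis vector with 0-based index `0`). -/
noncomputable def P1 (m n : ℕ) : Set (V m n) :=
  -- L(1)
  ({v | ∃ i j : Fin m, 1 ≤ (i : ℕ) ∧ i < j ∧
      (v = ε i + ε j ∨ v = ε i - ε j ∨ v = -ε i + ε j ∨ v = -ε i - ε j)} ∪
   {v | ∃ k l : Fin n, k ≠ l ∧
      (v = δ k + δ l ∨ v = δ k - δ l ∨ v = -δ k + δ l ∨ v = -δ k - δ l)} ∪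
   {v | ∃ k : Fin n, v = (2 : ℝ) • δ k ∨ v = -((2 : ℝ) • δ k)} ∪
   {v | ∃ (i : Fin m) (k : Fin n), 1 ≤ (i : ℕ) ∧
      (v = ε i + δ k ∨ v = ε i - δ k ∨ v = -ε i + δ k ∨ v = -ε i - δ k)}) ∪
  -- N⁺(1)
  ({v | ∃ i j : Fin m, (i : ℕ) = 0 ∧ 1 ≤ (j : ℕ) ∧ (v = ε i + ε j ∨ v = ε i - ε j)} ∪
   {v | ∃ (i : Fin m) (k : Fin n), (i : ℕ) = 0 ∧ (v = ε i + δ k ∨ v = ε i - δ k)})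

/-- The linear map `θ` sending `ε_m ↦ -ε_m` and fixing all other basis vectors. -/
def θmap (m n : ℕ) : V m n → V m n :=
  fun v => Sum.elim (fun i : Fin m => if (i : ℕ) = m - 1 then -(v (Sum.inl i)) else v (Sum.inl i))
    (fun k : Fin n => v (Sum.inr k))

/-- `P̄(m) = θ(P(m))`. -/
noncomputable def Pmbar (m n : ℕ) : Set (V m n) := θmap m n '' Pm m n

/-- The action of an element of the Weyl group `W` of `so(2m) × sp(2n)`;
`σ, τ` are the permutations and `s, t` the (±1) signs (with `∏ s = 1`). -/
def act (σ : Equiv.Perm (Fin m)) (τ : Equiv.Perm (Fin n))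
    (s : Fin m → ℝ) (t : Fin n → ℝ) : V m n → V m n :=
  fun v => Sum.elim (fun i => s i * v (Sum.inl (σ.symm i)))
    (fun k => t k * v (Sum.inr (τ.symm k)))

/-- Membership of a transformation in the Weyl group of `so(2m) × sp(2n)`:
signs are `±1` and the number of minus signs among the `ε`'s is even. -/
def InW (σ : Equiv.Perm (Fin m)) (τ : Equiv.Perm (Fin n))
    (s : Fin m → ℝ) (t : Fin n → ℝ) : Prop :=
  (∀ i, s i = 1 ∨ s i = -1) ∧ (∀ k, t k = 1 ∨ t k = -1) ∧ (∏ i, s i = 1)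

end OspEven

namespace OspEven

variable {m n : ℕ}

/-- The linear functional with coefficients `c` on the `ε`'s and `d` on the `δ`'s. -/
noncomputable def F (c : Fin m → ℝ) (d : Fin n → ℝ) (v : V m n) : ℝ :=
  (∑ i, c i * v (Sum.inl i)) + ∑ k, d k * v (Sum.inr k)

lemma F_add (c : Fin m → ℝ) (d : Fin n → ℝ) (u v : V m n) :
    F c d (u + v) = F c d u + F c d v := by
  simp only [F, Pi.add_apply, mul_add, Finset.sum_add_distrib]; ring

lemma F_neg (c : Fin m → ℝ) (d : Fin n → ℝ) (v : V m n) :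
    F c d (-v) = -(F c d v) := by
  simp only [F, Pi.neg_apply, mul_neg, Finset.sum_neg_distrib]; ring

lemma F_sub (c : Fin m → ℝ) (d : Fin n → ℝ) (u v : V m n) :
    F c d (u - v) = F c d u - F c d v := by
  rw [sub_eq_add_neg, F_add, F_neg]; ring

lemma F_smul (c : Fin m → ℝ) (d : Fin n → ℝ) (r : ℝ) (v : V m n) :
    F c d (r • v) = r * F c d v := by
  simp only [F, Pi.smul_apply, smul_eq_mul, mul_add, Finset.mul_sum, mul_left_comm]

lemma F_eps (c : Fin m → ℝ) (d : Fin n → ℝ) (i : Fin m) :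
    F c d (ε i) = c i := by
  simp [F, ε, Pi.single_apply]

lemma F_delta (c : Fin m → ℝ) (d : Fin n → ℝ) (k : Fin n) :
    F c d (δ k) = d k := by
  simp [F, δ, Pi.single_apply]

/-- sign predicate -/
def Sg (a : ℝ) : Prop := a = 1 ∨ a = -1

lemma Sg.neg {a : ℝ} (h : Sg a) : Sg (-a) := by
  rcases h with rfl | rfl
  · exact Or.inr (by norm_num)
  · exact Or.inl (by norm_num)

lemma Sg.mul {a b : ℝ} (ha : Sg a) (hb : Sg b) : Sg (a * b) := by
  rcases ha with rfl | rfl <;> rcases hb with rfl | rfl <;> simp [Sg] <;> norm_num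

lemma Sg.sq {a : ℝ} (ha : Sg a) : a * a = 1 := by
  rcases ha with rfl | rfl <;> norm_num

/-! ### Membership constructors for `Δroot` -/

lemma mem_ee {i j : Fin m} (hij : i ≠ j) {a b : ℝ} (ha : Sg a) (hb : Sg b) :
    a • ε i + b • ε j ∈ Δroot m n := by
  refine Set.mem_union_left _ (Set.mem_union_left _ (Set.mem_union_left _ ?_))
  rcases ha with rfl | rfl <;> rcases hb with rfl | rfl
  · exact ⟨i, j, hij, Or.inl (by module)⟩
  · exact ⟨i, j, hij, Or.inr (Or.inl (by module))⟩
  · exact ⟨i, j, hij, Or.inr (Or.inr (Or.inl (by module)))⟩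
  · exact ⟨i, j, hij, Or.inr (Or.inr (Or.inr (by module)))⟩

lemma mem_dd {k l : Fin n} (hkl : k ≠ l) {a b : ℝ} (ha : Sg a) (hb : Sg b) :
    a • δ k + b • δ l ∈ Δroot m n := by
  refine Set.mem_union_left _ (Set.mem_union_left _ (Set.mem_union_right _ ?_))
  rcases ha with rfl | rfl <;> rcases hb with rfl | rfl
  · exact ⟨k, l, hkl, Or.inl (by module)⟩
  · exact ⟨k, l, hkl, Or.inr (Or.inl (by module))⟩
  · exact ⟨k, l, hkl, Or.inr (Or.inr (Or.inl (by module)))⟩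
  · exact ⟨k, l, hkl, Or.inr (Or.inr (Or.inr (by module)))⟩

lemma mem_2d (k : Fin n) {a : ℝ} (ha : Sg a) :
    a • ((2 : ℝ) • δ k) ∈ (Δroot m n) := by
  refine Set.mem_union_left _ (Set.mem_union_right _ ?_)
  rcases ha with rfl | rfl
  · exact ⟨k, Or.inl (by module)⟩
  · exact ⟨k, Or.inr (by module)⟩

lemma mem_ed (i : Fin m) (k : Fin n) {a b : ℝ} (ha : Sg a) (hb : Sg b) :
    a • ε i + b • δ k ∈ Δroot m n := by
  refine Set.mem_union_right _ ?_
  rcases ha with rfl | rfl <;> rcases hb with rfl | rfl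
  · exact ⟨i, k, Or.inl (by module)⟩
  · exact ⟨i, k, Or.inr (Or.inl (by module))⟩
  · exact ⟨i, k, Or.inr (Or.inr (Or.inl (by module)))⟩
  · exact ⟨i, k, Or.inr (Or.inr (Or.inr (by module)))⟩

/-! ### The action -/

lemma act_add (σ : Equiv.Perm (Fin m)) (τ : Equiv.Perm (Fin n)) (s : Fin m → ℝ)
    (t : Fin n → ℝ) (u v : V m n) :
    act σ τ s t (u + v) = act σ τ s t u + act σ τ s t v := by
  funext x; cases x <;> simp [act, mul_add]

lemma act_neg (σ : Equiv.Perm (Fin m)) (τ : Equiv.Perm (Fin n)) (s : Fin m → ℝ)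
    (t : Fin n → ℝ) (v : V m n) :
    act σ τ s t (-v) = -(act σ τ s t v) := by
  funext x; cases x <;> simp [act]

lemma act_sub (σ : Equiv.Perm (Fin m)) (τ : Equiv.Perm (Fin n)) (s : Fin m → ℝ)
    (t : Fin n → ℝ) (u v : V m n) :
    act σ τ s t (u - v) = act σ τ s t u - act σ τ s t v := by
  rw [sub_eq_add_neg, act_add, act_neg, sub_eq_add_neg]

lemma act_smul (σ : Equiv.Perm (Fin m)) (τ : Equiv.Perm (Fin n)) (s : Fin m → ℝ)
    (t : Fin n → ℝ) (r : ℝ) (v : V m n) :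
    act σ τ s t (r • v) = r • act σ τ s t v := by
  funext x; cases x <;> simp [act, mul_left_comm] <;> ring

lemma act_eps (σ : Equiv.Perm (Fin m)) (τ : Equiv.Perm (Fin n)) (s : Fin m → ℝ)
    (t : Fin n → ℝ) (i : Fin m) :
    act σ τ s t (ε i) = s (σ i) • ε (σ i) := by
  funext x
  cases x with
  | inl i' =>
      by_cases h : i' = σ i <;>
        simp [act, ε, Pi.single_apply, Equiv.symm_apply_eq, h]
  | inr k' => simp [act, ε, Pi.single_apply]

lemma act_delta (σ : Equiv.Perm (Fin m)) (τ : Equiv.Perm (Fin n)) (s : Fin m → ℝ)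
    (t : Fin n → ℝ) (k : Fin n) :
    act σ τ s t (δ k) = t (τ k) • δ (τ k) := by
  funext x
  cases x with
  | inl i' => simp [act, δ, Pi.single_apply]
  | inr k' =>
      by_cases h : k' = τ k <;>
        simp [act, δ, Pi.single_apply, Equiv.symm_apply_eq, h]

lemma act_leftinv {σ : Equiv.Perm (Fin m)} {τ : Equiv.Perm (Fin n)} {s : Fin m → ℝ}
    {t : Fin n → ℝ} (hs : ∀ i, Sg (s i)) (ht : ∀ k, Sg (t k)) (v : V m n) :
    act σ.symm τ.symm (fun i => s (σ i)) (fun k => t (τ k)) (act σ τ s t v) = v := by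
  funext x
  cases x with
  | inl i =>
      rcases hs (σ i) with h | h <;> simp [act, h]
  | inr k =>
      rcases ht (τ k) with h | h <;> simp [act, h]

lemma act_rightinv {σ : Equiv.Perm (Fin m)} {τ : Equiv.Perm (Fin n)} {s : Fin m → ℝ}
    {t : Fin n → ℝ} (hs : ∀ i, Sg (s i)) (ht : ∀ k, Sg (t k)) (v : V m n) :
    act σ τ s t (act σ.symm τ.symm (fun i => s (σ i)) (fun k => t (τ k)) v) = v := by
  have h := act_leftinv (σ := σ.symm) (τ := τ.symm) (s := fun i => s (σ i))
    (t := fun k => t (τ k)) (fun i => hs _) (fun k => ht _) v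
  simpa using h

lemma act_mem {σ : Equiv.Perm (Fin m)} {τ : Equiv.Perm (Fin n)} {s : Fin m → ℝ}
    {t : Fin n → ℝ} (hs : ∀ i, Sg (s i)) (ht : ∀ k, Sg (t k)) {v : V m n}
    (hv : v ∈ Δroot m n) : act σ τ s t v ∈ Δroot m n := by
  rcases hv with (((⟨i, j, hij, hv⟩ | ⟨k, l, hkl, hv⟩) | ⟨k, hv⟩) | ⟨i, k, hv⟩)
  · have hij' : σ i ≠ σ j := fun h => hij (σ.injective h)
    rcases hv with rfl | rfl | rfl | rfl
    · rw [act_add, act_eps, act_eps]; exact mem_ee hij' (hs _) (hs _)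
    · rw [act_sub, act_eps, act_eps, sub_eq_add_neg, ← neg_smul]
      exact mem_ee hij' (hs _) (hs _).neg
    · rw [act_add, act_neg, act_eps, act_eps, ← neg_smul]
      exact mem_ee hij' (hs _).neg (hs _)
    · rw [act_sub, act_neg, act_eps, act_eps, sub_eq_add_neg, ← neg_smul, ← neg_smul]
      exact mem_ee hij' (hs _).neg (hs _).neg
  · have hkl' : τ k ≠ τ l := fun h => hkl (τ.injective h)
    rcases hv with rfl | rfl | rfl | rfl
    · rw [act_add, act_delta, act_delta]; exact mem_dd hkl' (ht _) (ht _)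
    · rw [act_sub, act_delta, act_delta, sub_eq_add_neg, ← neg_smul]
      exact mem_dd hkl' (ht _) (ht _).neg
    · rw [act_add, act_neg, act_delta, act_delta, ← neg_smul]
      exact mem_dd hkl' (ht _).neg (ht _)
    · rw [act_sub, act_neg, act_delta, act_delta, sub_eq_add_neg, ← neg_smul, ← neg_smul]
      exact mem_dd hkl' (ht _).neg (ht _).neg
  · rcases hv with rfl | rfl
    · rw [act_smul, act_delta, smul_comm]; exact mem_2d _ (ht _)
    · rw [act_neg, act_smul, act_delta, smul_comm, ← neg_smul]
      exact mem_2d _ (ht _).neg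
  · rcases hv with rfl | rfl | rfl | rfl
    · rw [act_add, act_eps, act_delta]; exact mem_ed _ _ (hs _) (ht _)
    · rw [act_sub, act_eps, act_delta, sub_eq_add_neg, ← neg_smul]
      exact mem_ed _ _ (hs _) (ht _).neg
    · rw [act_add, act_neg, act_eps, act_delta, ← neg_smul]
      exact mem_ed _ _ (hs _).neg (ht _)
    · rw [act_sub, act_neg, act_eps, act_delta, sub_eq_add_neg, ← neg_smul, ← neg_smul]
      exact mem_ed _ _ (hs _).neg (ht _).neg

lemma neg_mem_Δ {v : V m n} (hv : v ∈ Δroot m n) : -v ∈ Δroot m n := by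
  have h : -v = act (1 : Equiv.Perm (Fin m)) (1 : Equiv.Perm (Fin n))
      (fun _ => -1) (fun _ => -1) v := by
    funext x; cases x <;> simp [act] <;> rfl
  rw [h]
  exact act_mem (fun _ => Or.inr rfl) (fun _ => Or.inr rfl) hv

lemma F_act (c : Fin m → ℝ) (d : Fin n → ℝ) (σ : Equiv.Perm (Fin m))
    (τ : Equiv.Perm (Fin n)) (s : Fin m → ℝ) (t : Fin n → ℝ) (v : V m n) :
    F c d (act σ τ s t v) =
      F (fun i => c (σ i) * s (σ i)) (fun k => d (τ k) * t (τ k)) v := by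
  simp only [F, act, Sum.elim_inl, Sum.elim_inr]
  congr 1
  · exact (Fintype.sum_equiv σ _ _ (fun x => by simp [mul_assoc])).symm
  · exact (Fintype.sum_equiv τ _ _ (fun x => by simp [mul_assoc])).symm

lemma act_image_F {σ : Equiv.Perm (Fin m)} {τ : Equiv.Perm (Fin n)} {s : Fin m → ℝ}
    {t : Fin n → ℝ} (hs : ∀ i, Sg (s i)) (ht : ∀ k, Sg (t k))
    {c d : _} {c' : Fin m → ℝ} {d' : Fin n → ℝ}
    (hrel : ∀ v, F c d (act σ τ s t v) = F c' d' v) :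
    act σ τ s t '' {v | v ∈ Δroot m n ∧ 0 ≤ F c' d' v} =
      {v | v ∈ Δroot m n ∧ 0 ≤ F c d v} := by
  ext u
  constructor
  · rintro ⟨v, ⟨hvΔ, hvF⟩, rfl⟩
    exact ⟨act_mem hs ht hvΔ, by rw [hrel]; exact hvF⟩
  · rintro ⟨huΔ, huF⟩
    refine ⟨act σ.symm τ.symm (fun i => s (σ i)) (fun k => t (τ k)) u, ⟨?_, ?_⟩,
      act_rightinv hs ht u⟩
    · exact act_mem (fun i => hs _) (fun k => ht _) huΔ
    · rw [← hrel, act_rightinv hs ht u]; exact huF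

end OspEven
namespace OspEven

variable {m n : ℕ}

lemma cominuscule_phi {a : ℝ} (ha : 0 < a) (φ : V m n → ℝ)
    (hadd : ∀ u v, φ (u + v) = φ u + φ v) (hneg : ∀ v, φ (-v) = -φ v)
    (hval : ∀ v ∈ Δroot m n, φ v = 0 ∨ φ v = a ∨ φ v = -a)
    (hne : ∃ v ∈ Δroot m n, φ v ≠ 0) :
    IsCominuscule (Δroot m n) {v | v ∈ Δroot m n ∧ 0 ≤ φ v} := by
  have hsub : {v | v ∈ Δroot m n ∧ 0 ≤ φ v} ⊆ Δroot m n := fun v hv => hv.1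
  constructor
  · refine ⟨?_, ?_, ?_⟩
    · rw [Set.ssubset_def]
      refine ⟨hsub, fun hΔP => ?_⟩
      obtain ⟨v, hvΔ, hvne⟩ := hne
      rcases lt_or_gt_of_ne hvne with h | h
      · have h2 := (hΔP hvΔ).2; linarith
      · have h2 := (hΔP (neg_mem_Δ hvΔ)).2
        rw [hneg] at h2; linarith
    · ext u
      constructor
      · intro hu
        by_cases h : 0 ≤ φ u
        · exact Or.inl ⟨hu, h⟩
        · refine Or.inr ?_
          rw [Set.mem_neg]
          exact ⟨neg_mem_Δ hu, by rw [hneg]; linarith⟩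
      · rintro (hu | hu)
        · exact hu.1
        · rw [Set.mem_neg] at hu
          have := neg_mem_Δ hu.1; rwa [neg_neg] at this
    · rintro α ⟨hαΔ, hαF⟩ β ⟨hβΔ, hβF⟩ hsum
      exact ⟨hsum, by rw [hadd]; linarith⟩
  · rintro α ⟨⟨hαΔ, hαF⟩, hα'⟩ β ⟨⟨hβΔ, hβF⟩, hβ'⟩ hsum
    rw [Set.mem_neg] at hα' hβ'
    have hαa : φ α = a := by
      rcases hval α hαΔ with h | h | h
      · exact absurd ⟨neg_mem_Δ hαΔ, by rw [hneg, h]; norm_num⟩ hα'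
      · exact h
      · linarith
    have hβa : φ β = a := by
      rcases hval β hβΔ with h | h | h
      · exact absurd ⟨neg_mem_Δ hβΔ, by rw [hneg, h]; norm_num⟩ hβ'
      · exact h
      · linarith
    rcases hval _ hsum with h | h | h <;> rw [hadd, hαa, hβa] at h <;> linarith


lemma cominuscule_F {a : ℝ} (ha : 0 < a) (c : Fin m → ℝ) (d : Fin n → ℝ)
    (hval : ∀ v ∈ Δroot m n, F c d v = 0 ∨ F c d v = a ∨ F c d v = -a)
    (hne : ∃ v ∈ Δroot m n, F c d v ≠ 0) :
    IsCominuscule (Δroot m n) {v | v ∈ Δroot m n ∧ 0 ≤ F c d v} :=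
  cominuscule_phi ha (F c d) (F_add c d) (F_neg c d) hval hne

lemma val_Pm : ∀ v ∈ Δroot m n,
    F (fun _ => (1:ℝ)) (fun _ => (1:ℝ)) v = 0 ∨
    F (fun _ => (1:ℝ)) (fun _ => (1:ℝ)) v = 2 ∨
    F (fun _ => (1:ℝ)) (fun _ => (1:ℝ)) v = -2 := by
  rintro v ((((⟨i, j, hij, rfl | rfl | rfl | rfl⟩) | ⟨k, l, hkl, rfl | rfl | rfl | rfl⟩) |
    ⟨k, rfl | rfl⟩) | ⟨i, k, rfl | rfl | rfl | rfl⟩) <;>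
    simp [F_add, F_sub, F_neg, F_smul, F_eps, F_delta] <;> norm_num

lemma val_Pmbar : ∀ v ∈ Δroot m n,
    F (fun i : Fin m => if (i:ℕ) = m - 1 then (-1:ℝ) else 1) (fun _ => (1:ℝ)) v = 0 ∨
    F (fun i : Fin m => if (i:ℕ) = m - 1 then (-1:ℝ) else 1) (fun _ => (1:ℝ)) v = 2 ∨
    F (fun i : Fin m => if (i:ℕ) = m - 1 then (-1:ℝ) else 1) (fun _ => (1:ℝ)) v = -2 := by
  intro v hv
  rcases hv with ((h | h) | h) | h
  · obtain ⟨i, j, hij, rfl | rfl | rfl | rfl⟩ := h <;>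
      by_cases hi : (i:ℕ) = m - 1 <;> by_cases hj : (j:ℕ) = m - 1 <;>
      norm_num [F_add, F_sub, F_neg, F_smul, F_eps, F_delta, hi, hj]
  · obtain ⟨k, l, hkl, rfl | rfl | rfl | rfl⟩ := h <;>
      norm_num [F_add, F_sub, F_neg, F_smul, F_eps, F_delta]
  · obtain ⟨k, rfl | rfl⟩ := h <;>
      norm_num [F_add, F_sub, F_neg, F_smul, F_eps, F_delta]
  · obtain ⟨i, k, rfl | rfl | rfl | rfl⟩ := h <;>
      by_cases hi : (i:ℕ) = m - 1 <;>
      norm_num [F_add, F_sub, F_neg, F_smul, F_eps, F_delta, hi]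

lemma val_P1 (hm : 0 < m) : ∀ v ∈ Δroot m n,
    F (fun i : Fin m => if (i:ℕ) = 0 then (1:ℝ) else 0) (fun _ => (0:ℝ)) v = 0 ∨
    F (fun i : Fin m => if (i:ℕ) = 0 then (1:ℝ) else 0) (fun _ => (0:ℝ)) v = 1 ∨
    F (fun i : Fin m => if (i:ℕ) = 0 then (1:ℝ) else 0) (fun _ => (0:ℝ)) v = -1 := by
  intro v hv
  rcases hv with ((h | h) | h) | h
  · obtain ⟨i, j, hij, rfl | rfl | rfl | rfl⟩ := h <;>
    · by_cases hi : (i:ℕ) = 0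
      · have hj : (j:ℕ) ≠ 0 := fun h' => hij (Fin.ext (hi.trans h'.symm))
        norm_num [F_add, F_sub, F_neg, F_smul, F_eps, F_delta, hi, hj]
      · by_cases hj : (j:ℕ) = 0 <;>
          norm_num [F_add, F_sub, F_neg, F_smul, F_eps, F_delta, hi, hj]
  · obtain ⟨k, l, hkl, rfl | rfl | rfl | rfl⟩ := h <;>
      norm_num [F_add, F_sub, F_neg, F_smul, F_eps, F_delta]
  · obtain ⟨k, rfl | rfl⟩ := h <;>
      norm_num [F_add, F_sub, F_neg, F_smul, F_eps, F_delta]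
  · obtain ⟨i, k, rfl | rfl | rfl | rfl⟩ := h <;>
      by_cases hi : (i:ℕ) = 0 <;>
      norm_num [F_add, F_sub, F_neg, F_smul, F_eps, F_delta, hi]

end OspEven
namespace OspEven

variable {m n : ℕ}

lemma Pm_eq : Pm m n =
    {v | v ∈ Δroot m n ∧ 0 ≤ F (fun _ => (1:ℝ)) (fun _ => (1:ℝ)) v} := by
  ext v
  constructor
  · intro hv
    rcases hv with ((⟨i, j, hij, rfl⟩ | ⟨k, l, hkl, rfl⟩) | ⟨i, k, rfl | rfl⟩) |
      (((⟨i, j, hij, rfl⟩ | ⟨k, l, hkl, rfl⟩) | ⟨k, rfl⟩) | ⟨i, k, rfl⟩)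
    · exact ⟨Set.mem_union_left _ (Set.mem_union_left _ (Set.mem_union_left _
        ⟨i, j, hij, Or.inr (Or.inl rfl)⟩)),
        by norm_num [F_add, F_sub, F_neg, F_smul, F_eps, F_delta]⟩
    · exact ⟨Set.mem_union_left _ (Set.mem_union_left _ (Set.mem_union_right _
        ⟨k, l, hkl, Or.inr (Or.inl rfl)⟩)),
        by norm_num [F_add, F_sub, F_neg, F_smul, F_eps, F_delta]⟩
    · exact ⟨Set.mem_union_right _ ⟨i, k, Or.inr (Or.inl rfl)⟩,
        by norm_num [F_add, F_sub, F_neg, F_smul, F_eps, F_delta]⟩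
    · exact ⟨Set.mem_union_right _ ⟨i, k, Or.inr (Or.inr (Or.inl (by module)))⟩,
        by norm_num [F_add, F_sub, F_neg, F_smul, F_eps, F_delta]⟩
    · exact ⟨Set.mem_union_left _ (Set.mem_union_left _ (Set.mem_union_left _
        ⟨i, j, hij, Or.inl rfl⟩)),
        by norm_num [F_add, F_sub, F_neg, F_smul, F_eps, F_delta]⟩
    · exact ⟨Set.mem_union_left _ (Set.mem_union_left _ (Set.mem_union_right _
        ⟨k, l, hkl, Or.inl rfl⟩)),
        by norm_num [F_add, F_sub, F_neg, F_smul, F_eps, F_delta]⟩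
    · exact ⟨Set.mem_union_left _ (Set.mem_union_right _ ⟨k, Or.inl rfl⟩),
        by norm_num [F_add, F_sub, F_neg, F_smul, F_eps, F_delta]⟩
    · exact ⟨Set.mem_union_right _ ⟨i, k, Or.inl rfl⟩,
        by norm_num [F_add, F_sub, F_neg, F_smul, F_eps, F_delta]⟩
  · rintro ⟨hvΔ, hvF⟩
    rcases hvΔ with ((h | h) | h) | h
    · obtain ⟨i, j, hij, rfl | rfl | rfl | rfl⟩ := h
      · exact Set.mem_union_right _ (Set.mem_union_left _ (Set.mem_union_left _
          (Set.mem_union_left _ ⟨i, j, hij, rfl⟩)))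
      · exact Set.mem_union_left _ (Set.mem_union_left _ (Set.mem_union_left _
          ⟨i, j, hij, rfl⟩))
      · exact Set.mem_union_left _ (Set.mem_union_left _ (Set.mem_union_left _
          ⟨j, i, hij.symm, by module⟩))
      · exfalso
        norm_num [F_add, F_sub, F_neg, F_smul, F_eps, F_delta] at hvF
    · obtain ⟨k, l, hkl, rfl | rfl | rfl | rfl⟩ := h
      · exact Set.mem_union_right _ (Set.mem_union_left _ (Set.mem_union_left _
          (Set.mem_union_right _ ⟨k, l, hkl, rfl⟩)))
      · exact Set.mem_union_left _ (Set.mem_union_left _ (Set.mem_union_right _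
          ⟨k, l, hkl, rfl⟩))
      · exact Set.mem_union_left _ (Set.mem_union_left _ (Set.mem_union_right _
          ⟨l, k, hkl.symm, by module⟩))
      · exfalso
        norm_num [F_add, F_sub, F_neg, F_smul, F_eps, F_delta] at hvF
    · obtain ⟨k, rfl | rfl⟩ := h
      · exact Set.mem_union_right _ (Set.mem_union_left _ (Set.mem_union_right _ ⟨k, rfl⟩))
      · exfalso
        norm_num [F_add, F_sub, F_neg, F_smul, F_eps, F_delta] at hvF
    · obtain ⟨i, k, rfl | rfl | rfl | rfl⟩ := h
      · exact Set.mem_union_right _ (Set.mem_union_right _ ⟨i, k, rfl⟩)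
      · exact Set.mem_union_left _ (Set.mem_union_right _ ⟨i, k, Or.inl rfl⟩)
      · exact Set.mem_union_left _ (Set.mem_union_right _ ⟨i, k, Or.inr (by module)⟩)
      · exfalso
        norm_num [F_add, F_sub, F_neg, F_smul, F_eps, F_delta] at hvF

lemma theta_eq : θmap m n =
    act 1 1 (fun i : Fin m => if (i:ℕ) = m - 1 then (-1:ℝ) else 1) (fun _ => (1:ℝ)) := by
  funext v x
  cases x with
  | inl i =>
      by_cases h : (i:ℕ) = m - 1 <;> simp [θmap, act, h] <;> rfl
  | inr k => simp [θmap, act] <;> rfl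

lemma Pmbar_eq : Pmbar m n =
    {v | v ∈ Δroot m n ∧
      0 ≤ F (fun i : Fin m => if (i:ℕ) = m - 1 then (-1:ℝ) else 1) (fun _ => (1:ℝ)) v} := by
  rw [Pmbar, theta_eq, Pm_eq]
  refine act_image_F (fun i => ?_) (fun k => Or.inl rfl) (fun v => ?_)
  · by_cases h : (i:ℕ) = m - 1
    · exact Or.inr (by simp [h])
    · exact Or.inl (by simp [h])
  rw [F_act]
  congr 1 <;> funext x <;> simp <;> split_ifs <;> norm_num <;> simp_all

end OspEven
namespace OspEven

variable {m n : ℕ}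

lemma P1_eq : P1 m n =
    {v | v ∈ Δroot m n ∧
      0 ≤ F (fun i : Fin m => if (i:ℕ) = 0 then (1:ℝ) else 0) (fun _ => (0:ℝ)) v} := by
  ext v
  constructor
  · intro hv
    rcases hv with (((⟨i, j, h1i, hij, hv4⟩ | ⟨k, l, hkl, hv4⟩) | ⟨k, hv2⟩) |
      ⟨i, k, h1i, hv4⟩) | (⟨i, j, hi0, h1j, hv2⟩ | ⟨i, k, hi0, hv2⟩)
    · have hij' : (i:ℕ) < (j:ℕ) := Fin.lt_def.mp hij
      have hi : (i:ℕ) ≠ 0 := by omega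
      have hj : (j:ℕ) ≠ 0 := by omega
      have hne : i ≠ j := ne_of_lt hij
      rcases hv4 with rfl | rfl | rfl | rfl <;>
        exact ⟨Set.mem_union_left _ (Set.mem_union_left _ (Set.mem_union_left _
          ⟨i, j, hne, by tauto⟩)),
          by norm_num [F_add, F_sub, F_neg, F_smul, F_eps, F_delta, hi, hj]⟩
    · rcases hv4 with rfl | rfl | rfl | rfl <;>
        exact ⟨Set.mem_union_left _ (Set.mem_union_left _ (Set.mem_union_right _
          ⟨k, l, hkl, by tauto⟩)),
          by norm_num [F_add, F_sub, F_neg, F_smul, F_eps, F_delta]⟩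
    · rcases hv2 with rfl | rfl <;>
        exact ⟨Set.mem_union_left _ (Set.mem_union_right _ ⟨k, by tauto⟩),
          by norm_num [F_add, F_sub, F_neg, F_smul, F_eps, F_delta]⟩
    · have hi : (i:ℕ) ≠ 0 := by omega
      rcases hv4 with rfl | rfl | rfl | rfl <;>
        exact ⟨Set.mem_union_right _ ⟨i, k, by tauto⟩,
          by norm_num [F_add, F_sub, F_neg, F_smul, F_eps, F_delta, hi]⟩
    · have hj : (j:ℕ) ≠ 0 := by omega
      have hne : i ≠ j := Fin.ne_of_val_ne (by omega)
      rcases hv2 with rfl | rfl <;>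
        exact ⟨Set.mem_union_left _ (Set.mem_union_left _ (Set.mem_union_left _
          ⟨i, j, hne, by tauto⟩)),
          by norm_num [F_add, F_sub, F_neg, F_smul, F_eps, F_delta, hi0, hj]⟩
    · rcases hv2 with rfl | rfl <;>
        exact ⟨Set.mem_union_right _ ⟨i, k, by tauto⟩,
          by norm_num [F_add, F_sub, F_neg, F_smul, F_eps, F_delta, hi0]⟩
  · rintro ⟨hvΔ, hvF⟩
    rcases hvΔ with ((h | h) | h) | h
    · obtain ⟨i, j, hij, rfl | rfl | rfl | rfl⟩ := h
      · by_cases hi : (i:ℕ) = 0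
        · have hj : (j:ℕ) ≠ 0 := fun h' => hij (Fin.ext (hi.trans h'.symm))
          exact Set.mem_union_right _ (Set.mem_union_left _
            ⟨i, j, hi, by omega, Or.inl rfl⟩)
        · by_cases hj : (j:ℕ) = 0
          · exact Set.mem_union_right _ (Set.mem_union_left _
              ⟨j, i, hj, by omega, Or.inl (by module)⟩)
          · rcases lt_or_gt_of_ne hij with hlt | hlt
            · exact Set.mem_union_left _ (Set.mem_union_left _ (Set.mem_union_left _
                (Set.mem_union_left _ ⟨i, j, by omega, hlt, Or.inl rfl⟩)))
            · exact Set.mem_union_left _ (Set.mem_union_left _ (Set.mem_union_left _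
                (Set.mem_union_left _ ⟨j, i, by omega, hlt, Or.inl (by module)⟩)))
      · by_cases hi : (i:ℕ) = 0
        · have hj : (j:ℕ) ≠ 0 := fun h' => hij (Fin.ext (hi.trans h'.symm))
          exact Set.mem_union_right _ (Set.mem_union_left _
            ⟨i, j, hi, by omega, Or.inr rfl⟩)
        · by_cases hj : (j:ℕ) = 0
          · exfalso
            norm_num [F_add, F_sub, F_neg, F_smul, F_eps, F_delta, hi, hj] at hvF
          · rcases lt_or_gt_of_ne hij with hlt | hlt
            · exact Set.mem_union_left _ (Set.mem_union_left _ (Set.mem_union_left _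
                (Set.mem_union_left _ ⟨i, j, by omega, hlt, Or.inr (Or.inl rfl)⟩)))
            · exact Set.mem_union_left _ (Set.mem_union_left _ (Set.mem_union_left _
                (Set.mem_union_left _
                  ⟨j, i, by omega, hlt, Or.inr (Or.inr (Or.inl (by module)))⟩)))
      · by_cases hi : (i:ℕ) = 0
        · have hj : (j:ℕ) ≠ 0 := fun h' => hij (Fin.ext (hi.trans h'.symm))
          exfalso
          norm_num [F_add, F_sub, F_neg, F_smul, F_eps, F_delta, hi, hj] at hvF
        · by_cases hj : (j:ℕ) = 0
          · exact Set.mem_union_right _ (Set.mem_union_left _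
              ⟨j, i, hj, by omega, Or.inr (by module)⟩)
          · rcases lt_or_gt_of_ne hij with hlt | hlt
            · exact Set.mem_union_left _ (Set.mem_union_left _ (Set.mem_union_left _
                (Set.mem_union_left _ ⟨i, j, by omega, hlt, Or.inr (Or.inr (Or.inl rfl))⟩)))
            · exact Set.mem_union_left _ (Set.mem_union_left _ (Set.mem_union_left _
                (Set.mem_union_left _ ⟨j, i, by omega, hlt, Or.inr (Or.inl (by module))⟩)))
      · by_cases hi : (i:ℕ) = 0
        · have hj : (j:ℕ) ≠ 0 := fun h' => hij (Fin.ext (hi.trans h'.symm))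
          exfalso
          norm_num [F_add, F_sub, F_neg, F_smul, F_eps, F_delta, hi, hj] at hvF
        · by_cases hj : (j:ℕ) = 0
          · exfalso
            norm_num [F_add, F_sub, F_neg, F_smul, F_eps, F_delta, hi, hj] at hvF
          · rcases lt_or_gt_of_ne hij with hlt | hlt
            · exact Set.mem_union_left _ (Set.mem_union_left _ (Set.mem_union_left _
                (Set.mem_union_left _
                  ⟨i, j, by omega, hlt, Or.inr (Or.inr (Or.inr rfl))⟩)))
            · exact Set.mem_union_left _ (Set.mem_union_left _ (Set.mem_union_left _
                (Set.mem_union_left _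
                  ⟨j, i, by omega, hlt, Or.inr (Or.inr (Or.inr (by module)))⟩)))
    · obtain ⟨k, l, hkl, rfl | rfl | rfl | rfl⟩ := h <;>
        exact Set.mem_union_left _ (Set.mem_union_left _ (Set.mem_union_left _
          (Set.mem_union_right _ ⟨k, l, hkl, by tauto⟩)))
    · obtain ⟨k, rfl | rfl⟩ := h <;>
        exact Set.mem_union_left _ (Set.mem_union_left _ (Set.mem_union_right _
          ⟨k, by tauto⟩))
    · obtain ⟨i, k, rfl | rfl | rfl | rfl⟩ := h
      · by_cases hi : (i:ℕ) = 0
        · exact Set.mem_union_right _ (Set.mem_union_right _ ⟨i, k, hi, Or.inl rfl⟩)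
        · exact Set.mem_union_left _ (Set.mem_union_right _
            ⟨i, k, by omega, Or.inl rfl⟩)
      · by_cases hi : (i:ℕ) = 0
        · exact Set.mem_union_right _ (Set.mem_union_right _ ⟨i, k, hi, Or.inr rfl⟩)
        · exact Set.mem_union_left _ (Set.mem_union_right _
            ⟨i, k, by omega, Or.inr (Or.inl rfl)⟩)
      · by_cases hi : (i:ℕ) = 0
        · exfalso
          norm_num [F_add, F_sub, F_neg, F_smul, F_eps, F_delta, hi] at hvF
        · exact Set.mem_union_left _ (Set.mem_union_right _
            ⟨i, k, by omega, Or.inr (Or.inr (Or.inl rfl))⟩)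
      · by_cases hi : (i:ℕ) = 0
        · exfalso
          norm_num [F_add, F_sub, F_neg, F_smul, F_eps, F_delta, hi] at hvF
        · exact Set.mem_union_left _ (Set.mem_union_right _
            ⟨i, k, by omega, Or.inr (Or.inr (Or.inr rfl))⟩)

end OspEven
namespace OspEven

variable {m n : ℕ}

lemma case1 (hn : 1 ≤ n) {P : Set (V m n)}
    (hPΔ : P ⊆ Δroot m n)
    (total : ∀ v ∈ Δroot m n, v ∈ P ∨ -v ∈ P)
    (addP : ∀ α ∈ P, ∀ β ∈ P, α + β ∈ Δroot m n → α + β ∈ P)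
    (NN : ∀ α ∈ P, ∀ β ∈ P, -α ∉ P → -β ∉ P → α + β ∉ Δroot m n)
    (hnb : ∀ k : Fin n, ¬((2:ℝ) • δ k ∈ P ∧ -((2:ℝ) • δ k) ∈ P)) :
    ∃ c : Fin m → ℝ, ∃ d : Fin n → ℝ, (∀ i, Sg (c i)) ∧ (∀ k, Sg (d k)) ∧
      P = {v | v ∈ Δroot m n ∧ 0 ≤ F c d v} := by
  classical
  -- choose the long-root signs
  have hex : ∀ k : Fin n, ∃ dk : ℝ, Sg dk ∧ dk • ((2:ℝ) • δ k) ∈ P ∧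
      -(dk • ((2:ℝ) • δ k)) ∉ P := by
    intro k
    have hΔ : (2:ℝ) • δ k ∈ Δroot m n := by
      rw [show (2:ℝ) • δ k = (1:ℝ) • ((2:ℝ) • δ k) by module]
      exact mem_2d k (Or.inl rfl)
    rcases total _ hΔ with h | h
    · refine ⟨1, Or.inl rfl, by rwa [one_smul], ?_⟩
      rw [one_smul]; exact fun h' => hnb k ⟨h, h'⟩
    · refine ⟨-1, Or.inr rfl, ?_, ?_⟩
      · rwa [neg_one_smul]
      · rw [neg_one_smul, neg_neg]; exact fun h' => hnb k ⟨h', h⟩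
  choose d hd hdP hdN using hex
  -- existence of the ε-signs, per pair (i,k)
  have hedex : ∀ (i : Fin m) (k : Fin n), ∃ a : ℝ, Sg a ∧
      (a • ε i + d k • δ k ∈ P) ∧ (-(a • ε i + d k • δ k) ∉ P) ∧
      (a • ε i - d k • δ k ∈ P) ∧ (d k • δ k - a • ε i ∈ P) := by
    intro i k
    have ruleN : ∀ y ∈ P, y + d k • ((2:ℝ) • δ k) ∈ Δroot m n → -y ∉ P → False := by
      intro y hy hsum hy'
      exact NN y hy _ (hdP k) hy' (hdN k) hsum
    have hplus : ∀ a : ℝ, Sg a → a • ε i + d k • δ k ∈ P := by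
      intro a ha
      have hΔ : a • ε i + d k • δ k ∈ Δroot m n := mem_ed i k ha (hd k)
      rcases total _ hΔ with h | h
      · exact h
      · by_contra hno
        refine ruleN _ h ?_ (by rwa [neg_neg])
        rw [show -(a • ε i + d k • δ k) + d k • ((2:ℝ) • δ k) = (-a) • ε i + d k • δ k
          by module]
        exact mem_ed i k ha.neg (hd k)
    have hnotbothL : ¬(-(ε i + d k • δ k) ∈ P ∧ -(-ε i + d k • δ k) ∈ P) := by
      rintro ⟨h1, h2⟩
      have hsum : -(ε i + d k • δ k) + -(-ε i + d k • δ k) ∈ Δroot m n := by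
        rw [show -(ε i + d k • δ k) + -(-ε i + d k • δ k) = (-(d k)) • ((2:ℝ) • δ k)
          by module]
        exact mem_2d k (hd k).neg
      have h3 := addP _ h1 _ h2 hsum
      rw [show -(ε i + d k • δ k) + -(-ε i + d k • δ k) = -(d k • ((2:ℝ) • δ k)) by module]
        at h3
      exact hdN k h3
    by_cases hng : -(ε i + d k • δ k) ∈ P
    · refine ⟨-1, Or.inr rfl, hplus (-1) (Or.inr rfl), ?_, ?_, ?_⟩
      · intro h'
        refine hnotbothL ⟨hng, ?_⟩
        rw [show -(-ε i + d k • δ k) = -((-1:ℝ) • ε i + d k • δ k) by module]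
        exact h'
      · rw [show (-1:ℝ) • ε i - d k • δ k = -(ε i + d k • δ k) by module]; exact hng
      · rw [show d k • δ k - (-1:ℝ) • ε i = (1:ℝ) • ε i + d k • δ k by module]
        exact hplus 1 (Or.inl rfl)
    · refine ⟨1, Or.inl rfl, hplus 1 (Or.inl rfl), ?_, ?_, ?_⟩
      · rw [show -((1:ℝ) • ε i + d k • δ k) = -(ε i + d k • δ k) by module]; exact hng
      · by_contra hno
        refine NN _ (hplus 1 (Or.inl rfl)) _ (hplus (-1) (Or.inr rfl)) ?_ ?_ ?_
        · rw [show -((1:ℝ) • ε i + d k • δ k) = -(ε i + d k • δ k) by module]; exact hng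
        · intro h'
          apply hno
          rw [show (1:ℝ) • ε i - d k • δ k = -((-1:ℝ) • ε i + d k • δ k) by module]
          exact h'
        · rw [show ((1:ℝ) • ε i + d k • δ k) + ((-1:ℝ) • ε i + d k • δ k) =
            d k • ((2:ℝ) • δ k) by module]
          exact hPΔ (hdP k)
      · rw [show d k • δ k - (1:ℝ) • ε i = (-1:ℝ) • ε i + d k • δ k by module]
        exact hplus (-1) (Or.inr rfl)
  -- consistency of the ε-sign across different k
  have hedcons : ∀ (i : Fin m) (k l : Fin n) (a b : ℝ), Sg a → Sg b →
      (a • ε i + d k • δ k ∈ P) → (-(a • ε i + d k • δ k) ∉ P) →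
      (b • ε i + d l • δ l ∈ P) → (-(b • ε i + d l • δ l) ∉ P) → a = b := by
    intro i k l a b ha hb h1 h2 h3 h4
    by_contra hab
    have hb' : b = -a := by
      rcases ha with rfl | rfl <;> rcases hb with rfl | rfl <;> revert hab <;> norm_num
    subst hb'
    refine NN _ h1 _ h3 h2 h4 ?_
    by_cases hkl : k = l
    · subst hkl
      rw [show (a • ε i + d k • δ k) + ((-a) • ε i + d k • δ k) = d k • ((2:ℝ) • δ k)
        by module]
      exact hPΔ (hdP k)
    · rw [show (a • ε i + d k • δ k) + ((-a) • ε i + d l • δ l) = d k • δ k + d l • δ l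
        by module]
      exact mem_dd hkl (hd k) (hd l)
  choose c0 hc0 hP1 hP2 hP3 hP4 using hedex
  have k0 : Fin n := ⟨0, hn⟩
  set c : Fin m → ℝ := fun i => c0 i k0 with hc_def
  have hc : ∀ i, Sg (c i) := fun i => hc0 i k0
  have hceq : ∀ i k, c i = c0 i k := fun i k =>
    hedcons i k0 k _ _ (hc0 i k0) (hc0 i k) (hP1 i k0) (hP2 i k0) (hP1 i k) (hP2 i k)
  have fact_ed : ∀ i k, (c i • ε i + d k • δ k ∈ P) ∧ (-(c i • ε i + d k • δ k) ∉ P) ∧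
      (c i • ε i - d k • δ k ∈ P) ∧ (d k • δ k - c i • ε i ∈ P) := by
    intro i k
    rw [hceq i k]
    exact ⟨hP1 i k, hP2 i k, hP3 i k, hP4 i k⟩
  have fact_dd : ∀ k l, k ≠ l → (d k • δ k + d l • δ l ∈ P) ∧
      (-(d k • δ k + d l • δ l) ∉ P) ∧ (d k • δ k - d l • δ l ∈ P) := by
    intro k l hkl
    have hA : -(d k • δ k + d l • δ l) ∉ P := by
      intro h
      have hs1 : -(d k • δ k + d l • δ l) + d l • ((2:ℝ) • δ l) ∈ Δroot m n := by
        rw [show -(d k • δ k + d l • δ l) + d l • ((2:ℝ) • δ l) =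
          (-(d k)) • δ k + d l • δ l by module]
        exact mem_dd hkl (hd k).neg (hd l)
      have h2 : -(d k • δ k + d l • δ l) + d l • ((2:ℝ) • δ l) ∈ P :=
        addP _ h _ (hdP l) hs1
      have hs2 : -(d k • δ k + d l • δ l) +
          (-(d k • δ k + d l • δ l) + d l • ((2:ℝ) • δ l)) ∈ Δroot m n := by
        rw [show -(d k • δ k + d l • δ l) + (-(d k • δ k + d l • δ l) +
          d l • ((2:ℝ) • δ l)) = (-(d k)) • ((2:ℝ) • δ k) by module]
        exact mem_2d k (hd k).neg
      have h3 := addP _ h _ h2 hs2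
      rw [show -(d k • δ k + d l • δ l) + (-(d k • δ k + d l • δ l) +
        d l • ((2:ℝ) • δ l)) = -(d k • ((2:ℝ) • δ k)) by module] at h3
      exact hdN k h3
    have hsum : d k • δ k + d l • δ l ∈ P := by
      rcases total _ (mem_dd hkl (hd k) (hd l)) with h | h
      · exact h
      · exact absurd h hA
    refine ⟨hsum, hA, ?_⟩
    by_cases hsub : d k • δ k - d l • δ l ∈ P
    · exact hsub
    · exfalso
      have hΔs : d k • δ k - d l • δ l ∈ Δroot m n := by
        rw [show d k • δ k - d l • δ l = d k • δ k + (-(d l)) • δ l by module]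
        exact mem_dd hkl (hd k) (hd l).neg
      have h : -(d k • δ k - d l • δ l) ∈ P := by
        rcases total _ hΔs with h | h
        · exact absurd h hsub
        · exact h
      refine NN _ h _ (hdP k) (by rwa [neg_neg]) (hdN k) ?_
      rw [show -(d k • δ k - d l • δ l) + d k • ((2:ℝ) • δ k) =
        d k • δ k + d l • δ l by module]
      exact mem_dd hkl (hd k) (hd l)
  have fact_ee : ∀ i j, i ≠ j → (c i • ε i + c j • ε j ∈ P) ∧
      (-(c i • ε i + c j • ε j) ∉ P) ∧ (c i • ε i - c j • ε j ∈ P) := by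
    intro i j hij
    have h1 : c i • ε i + c j • ε j ∈ P := by
      have hΔ : (c i • ε i + d k0 • δ k0) + (c j • ε j - d k0 • δ k0) ∈ Δroot m n := by
        rw [show (c i • ε i + d k0 • δ k0) + (c j • ε j - d k0 • δ k0) =
          c i • ε i + c j • ε j by module]
        exact mem_ee hij (hc i) (hc j)
      have h := addP _ (fact_ed i k0).1 _ (fact_ed j k0).2.2.1 hΔ
      rwa [show (c i • ε i + d k0 • δ k0) + (c j • ε j - d k0 • δ k0) =
        c i • ε i + c j • ε j by module] at h
    refine ⟨h1, ?_, ?_⟩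
    · intro h
      have hΔ : -(c i • ε i + c j • ε j) + (c j • ε j - d k0 • δ k0) ∈ Δroot m n := by
        rw [show -(c i • ε i + c j • ε j) + (c j • ε j - d k0 • δ k0) =
          (-(c i)) • ε i + (-(d k0)) • δ k0 by module]
        exact mem_ed i k0 (hc i).neg (hd k0).neg
      have h2 := addP _ h _ (fact_ed j k0).2.2.1 hΔ
      rw [show -(c i • ε i + c j • ε j) + (c j • ε j - d k0 • δ k0) =
        -(c i • ε i + d k0 • δ k0) by module] at h2
      exact (fact_ed i k0).2.1 h2
    · have hΔ : (c i • ε i - d k0 • δ k0) + (d k0 • δ k0 - c j • ε j) ∈ Δroot m n := by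
        rw [show (c i • ε i - d k0 • δ k0) + (d k0 • δ k0 - c j • ε j) =
          c i • ε i + (-(c j)) • ε j by module]
        exact mem_ee hij (hc i) (hc j).neg
      have h := addP _ (fact_ed i k0).2.2.1 _ (fact_ed j k0).2.2.2 hΔ
      rwa [show (c i • ε i - d k0 • δ k0) + (d k0 • δ k0 - c j • ε j) =
        c i • ε i - c j • ε j by module] at h
  refine ⟨c, d, hc, hd, ?_⟩
  ext v
  constructor
  · intro hv
    refine ⟨hPΔ hv, ?_⟩
    rcases hPΔ hv with ((h | h) | h) | h
    · obtain ⟨i, j, hij, rfl | rfl | rfl | rfl⟩ := h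
      · rcases hc i with hci | hci <;> rcases hc j with hcj | hcj <;>
          try norm_num [F_add, F_sub, F_neg, F_smul, F_eps, F_delta, hci, hcj]
        exfalso
        have h := (fact_ee i j hij).2.1
        rw [hci, hcj] at h
        exact h (by rw [show -((-1:ℝ) • ε i + (-1:ℝ) • ε j) = ε i + ε j by module]; exact hv)
      · rcases hc i with hci | hci <;> rcases hc j with hcj | hcj <;>
          try norm_num [F_add, F_sub, F_neg, F_smul, F_eps, F_delta, hci, hcj]
        exfalso
        have h := (fact_ee i j hij).2.1
        rw [hci, hcj] at h
        exact h (by rw [show -((-1:ℝ) • ε i + (1:ℝ) • ε j) = ε i - ε j by module]; exact hv)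
      · rcases hc i with hci | hci <;> rcases hc j with hcj | hcj <;>
          try norm_num [F_add, F_sub, F_neg, F_smul, F_eps, F_delta, hci, hcj]
        exfalso
        have h := (fact_ee i j hij).2.1
        rw [hci, hcj] at h
        exact h (by rw [show -((1:ℝ) • ε i + (-1:ℝ) • ε j) = -ε i + ε j by module]; exact hv)
      · rcases hc i with hci | hci <;> rcases hc j with hcj | hcj <;>
          try norm_num [F_add, F_sub, F_neg, F_smul, F_eps, F_delta, hci, hcj]
        exfalso
        have h := (fact_ee i j hij).2.1
        rw [hci, hcj] at h
        exact h (by rw [show -((1:ℝ) • ε i + (1:ℝ) • ε j) = -ε i - ε j by module]; exact hv)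
    · obtain ⟨k, l, hkl, rfl | rfl | rfl | rfl⟩ := h
      · rcases hd k with hdk | hdk <;> rcases hd l with hdl | hdl <;>
          try norm_num [F_add, F_sub, F_neg, F_smul, F_eps, F_delta, hdk, hdl]
        exfalso
        have h := (fact_dd k l hkl).2.1
        rw [hdk, hdl] at h
        exact h (by rw [show -((-1:ℝ) • δ k + (-1:ℝ) • δ l) = δ k + δ l by module]; exact hv)
      · rcases hd k with hdk | hdk <;> rcases hd l with hdl | hdl <;>
          try norm_num [F_add, F_sub, F_neg, F_smul, F_eps, F_delta, hdk, hdl]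
        exfalso
        have h := (fact_dd k l hkl).2.1
        rw [hdk, hdl] at h
        exact h (by rw [show -((-1:ℝ) • δ k + (1:ℝ) • δ l) = δ k - δ l by module]; exact hv)
      · rcases hd k with hdk | hdk <;> rcases hd l with hdl | hdl <;>
          try norm_num [F_add, F_sub, F_neg, F_smul, F_eps, F_delta, hdk, hdl]
        exfalso
        have h := (fact_dd k l hkl).2.1
        rw [hdk, hdl] at h
        exact h (by rw [show -((1:ℝ) • δ k + (-1:ℝ) • δ l) = -δ k + δ l by module]; exact hv)
      · rcases hd k with hdk | hdk <;> rcases hd l with hdl | hdl <;>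
          try norm_num [F_add, F_sub, F_neg, F_smul, F_eps, F_delta, hdk, hdl]
        exfalso
        have h := (fact_dd k l hkl).2.1
        rw [hdk, hdl] at h
        exact h (by rw [show -((1:ℝ) • δ k + (1:ℝ) • δ l) = -δ k - δ l by module]; exact hv)
    · obtain ⟨k, rfl | rfl⟩ := h
      · rcases hd k with hdk | hdk <;>
          try norm_num [F_add, F_sub, F_neg, F_smul, F_eps, F_delta, hdk]
        exfalso
        have h := hdN k
        rw [hdk] at h
        exact h (by rw [show -((-1:ℝ) • ((2:ℝ) • δ k)) = (2:ℝ) • δ k by module]; exact hv)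
      · rcases hd k with hdk | hdk <;>
          try norm_num [F_add, F_sub, F_neg, F_smul, F_eps, F_delta, hdk]
        exfalso
        have h := hdN k
        rw [hdk] at h
        exact h (by rw [show -((1:ℝ) • ((2:ℝ) • δ k)) = -((2:ℝ) • δ k) by module]; exact hv)
    · obtain ⟨i, k, rfl | rfl | rfl | rfl⟩ := h
      · rcases hc i with hci | hci <;> rcases hd k with hdk | hdk <;>
          try norm_num [F_add, F_sub, F_neg, F_smul, F_eps, F_delta, hci, hdk]
        exfalso
        have h := (fact_ed i k).2.1
        rw [hci, hdk] at h
        exact h (by rw [show -((-1:ℝ) • ε i + (-1:ℝ) • δ k) = ε i + δ k by module]; exact hv)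
      · rcases hc i with hci | hci <;> rcases hd k with hdk | hdk <;>
          try norm_num [F_add, F_sub, F_neg, F_smul, F_eps, F_delta, hci, hdk]
        exfalso
        have h := (fact_ed i k).2.1
        rw [hci, hdk] at h
        exact h (by rw [show -((-1:ℝ) • ε i + (1:ℝ) • δ k) = ε i - δ k by module]; exact hv)
      · rcases hc i with hci | hci <;> rcases hd k with hdk | hdk <;>
          try norm_num [F_add, F_sub, F_neg, F_smul, F_eps, F_delta, hci, hdk]
        exfalso
        have h := (fact_ed i k).2.1
        rw [hci, hdk] at h
        exact h (by rw [show -((1:ℝ) • ε i + (-1:ℝ) • δ k) = -ε i + δ k by module]; exact hv)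
      · rcases hc i with hci | hci <;> rcases hd k with hdk | hdk <;>
          try norm_num [F_add, F_sub, F_neg, F_smul, F_eps, F_delta, hci, hdk]
        exfalso
        have h := (fact_ed i k).2.1
        rw [hci, hdk] at h
        exact h (by rw [show -((1:ℝ) • ε i + (1:ℝ) • δ k) = -ε i - δ k by module]; exact hv)
  · rintro ⟨hvΔ, hvF⟩
    rcases hvΔ with ((h | h) | h) | h
    · obtain ⟨i, j, hij, rfl | rfl | rfl | rfl⟩ := h
      · rcases hc i with hci | hci <;> rcases hc j with hcj | hcj
        · have h := (fact_ee i j hij).1; rw [hci, hcj] at h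
          rw [show ε i + ε j = (1:ℝ) • ε i + (1:ℝ) • ε j by module]; exact h
        · have h := (fact_ee i j hij).2.2; rw [hci, hcj] at h
          rw [show ε i + ε j = (1:ℝ) • ε i - (-1:ℝ) • ε j by module]; exact h
        · have h := (fact_ee j i hij.symm).2.2; rw [hci, hcj] at h
          rw [show ε i + ε j = (1:ℝ) • ε j - (-1:ℝ) • ε i by module]; exact h
        · exfalso; norm_num [F_add, F_sub, F_neg, F_smul, F_eps, F_delta, hci, hcj] at hvF
      · rcases hc i with hci | hci <;> rcases hc j with hcj | hcj
        · have h := (fact_ee i j hij).2.2; rw [hci, hcj] at h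
          rw [show ε i - ε j = (1:ℝ) • ε i - (1:ℝ) • ε j by module]; exact h
        · have h := (fact_ee i j hij).1; rw [hci, hcj] at h
          rw [show ε i - ε j = (1:ℝ) • ε i + (-1:ℝ) • ε j by module]; exact h
        · exfalso; norm_num [F_add, F_sub, F_neg, F_smul, F_eps, F_delta, hci, hcj] at hvF
        · have h := (fact_ee j i hij.symm).2.2; rw [hci, hcj] at h
          rw [show ε i - ε j = (-1:ℝ) • ε j - (-1:ℝ) • ε i by module]; exact h
      · rcases hc i with hci | hci <;> rcases hc j with hcj | hcj
        · have h := (fact_ee j i hij.symm).2.2; rw [hci, hcj] at h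
          rw [show -ε i + ε j = (1:ℝ) • ε j - (1:ℝ) • ε i by module]; exact h
        · exfalso; norm_num [F_add, F_sub, F_neg, F_smul, F_eps, F_delta, hci, hcj] at hvF
        · have h := (fact_ee i j hij).1; rw [hci, hcj] at h
          rw [show -ε i + ε j = (-1:ℝ) • ε i + (1:ℝ) • ε j by module]; exact h
        · have h := (fact_ee i j hij).2.2; rw [hci, hcj] at h
          rw [show -ε i + ε j = (-1:ℝ) • ε i - (-1:ℝ) • ε j by module]; exact h
      · rcases hc i with hci | hci <;> rcases hc j with hcj | hcj
        · exfalso; norm_num [F_add, F_sub, F_neg, F_smul, F_eps, F_delta, hci, hcj] at hvF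
        · have h := (fact_ee j i hij.symm).2.2; rw [hci, hcj] at h
          rw [show -ε i - ε j = (-1:ℝ) • ε j - (1:ℝ) • ε i by module]; exact h
        · have h := (fact_ee i j hij).2.2; rw [hci, hcj] at h
          rw [show -ε i - ε j = (-1:ℝ) • ε i - (1:ℝ) • ε j by module]; exact h
        · have h := (fact_ee i j hij).1; rw [hci, hcj] at h
          rw [show -ε i - ε j = (-1:ℝ) • ε i + (-1:ℝ) • ε j by module]; exact h
    · obtain ⟨k, l, hkl, rfl | rfl | rfl | rfl⟩ := h
      · rcases hd k with hdk | hdk <;> rcases hd l with hdl | hdl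
        · have h := (fact_dd k l hkl).1; rw [hdk, hdl] at h
          rw [show δ k + δ l = (1:ℝ) • δ k + (1:ℝ) • δ l by module]; exact h
        · have h := (fact_dd k l hkl).2.2; rw [hdk, hdl] at h
          rw [show δ k + δ l = (1:ℝ) • δ k - (-1:ℝ) • δ l by module]; exact h
        · have h := (fact_dd l k hkl.symm).2.2; rw [hdk, hdl] at h
          rw [show δ k + δ l = (1:ℝ) • δ l - (-1:ℝ) • δ k by module]; exact h
        · exfalso; norm_num [F_add, F_sub, F_neg, F_smul, F_eps, F_delta, hdk, hdl] at hvF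
      · rcases hd k with hdk | hdk <;> rcases hd l with hdl | hdl
        · have h := (fact_dd k l hkl).2.2; rw [hdk, hdl] at h
          rw [show δ k - δ l = (1:ℝ) • δ k - (1:ℝ) • δ l by module]; exact h
        · have h := (fact_dd k l hkl).1; rw [hdk, hdl] at h
          rw [show δ k - δ l = (1:ℝ) • δ k + (-1:ℝ) • δ l by module]; exact h
        · exfalso; norm_num [F_add, F_sub, F_neg, F_smul, F_eps, F_delta, hdk, hdl] at hvF
        · have h := (fact_dd l k hkl.symm).2.2; rw [hdk, hdl] at h
          rw [show δ k - δ l = (-1:ℝ) • δ l - (-1:ℝ) • δ k by module]; exact h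
      · rcases hd k with hdk | hdk <;> rcases hd l with hdl | hdl
        · have h := (fact_dd l k hkl.symm).2.2; rw [hdk, hdl] at h
          rw [show -δ k + δ l = (1:ℝ) • δ l - (1:ℝ) • δ k by module]; exact h
        · exfalso; norm_num [F_add, F_sub, F_neg, F_smul, F_eps, F_delta, hdk, hdl] at hvF
        · have h := (fact_dd k l hkl).1; rw [hdk, hdl] at h
          rw [show -δ k + δ l = (-1:ℝ) • δ k + (1:ℝ) • δ l by module]; exact h
        · have h := (fact_dd k l hkl).2.2; rw [hdk, hdl] at h
          rw [show -δ k + δ l = (-1:ℝ) • δ k - (-1:ℝ) • δ l by module]; exact h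
      · rcases hd k with hdk | hdk <;> rcases hd l with hdl | hdl
        · exfalso; norm_num [F_add, F_sub, F_neg, F_smul, F_eps, F_delta, hdk, hdl] at hvF
        · have h := (fact_dd l k hkl.symm).2.2; rw [hdk, hdl] at h
          rw [show -δ k - δ l = (-1:ℝ) • δ l - (1:ℝ) • δ k by module]; exact h
        · have h := (fact_dd k l hkl).2.2; rw [hdk, hdl] at h
          rw [show -δ k - δ l = (-1:ℝ) • δ k - (1:ℝ) • δ l by module]; exact h
        · have h := (fact_dd k l hkl).1; rw [hdk, hdl] at h
          rw [show -δ k - δ l = (-1:ℝ) • δ k + (-1:ℝ) • δ l by module]; exact h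
    · obtain ⟨k, rfl | rfl⟩ := h
      · rcases hd k with hdk | hdk
        · have h := hdP k; rw [hdk] at h
          rw [show (2:ℝ) • δ k = (1:ℝ) • ((2:ℝ) • δ k) by module]; exact h
        · exfalso; norm_num [F_add, F_sub, F_neg, F_smul, F_eps, F_delta, hdk] at hvF
      · rcases hd k with hdk | hdk
        · exfalso; norm_num [F_add, F_sub, F_neg, F_smul, F_eps, F_delta, hdk] at hvF
        · have h := hdP k; rw [hdk] at h
          rw [show -((2:ℝ) • δ k) = (-1:ℝ) • ((2:ℝ) • δ k) by module]; exact h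
    · obtain ⟨i, k, rfl | rfl | rfl | rfl⟩ := h
      · rcases hc i with hci | hci <;> rcases hd k with hdk | hdk
        · have h := (fact_ed i k).1; rw [hci, hdk] at h
          rw [show ε i + δ k = (1:ℝ) • ε i + (1:ℝ) • δ k by module]; exact h
        · have h := (fact_ed i k).2.2.1; rw [hci, hdk] at h
          rw [show ε i + δ k = (1:ℝ) • ε i - (-1:ℝ) • δ k by module]; exact h
        · have h := (fact_ed i k).2.2.2; rw [hci, hdk] at h
          rw [show ε i + δ k = (1:ℝ) • δ k - (-1:ℝ) • ε i by module]; exact h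
        · exfalso; norm_num [F_add, F_sub, F_neg, F_smul, F_eps, F_delta, hci, hdk] at hvF
      · rcases hc i with hci | hci <;> rcases hd k with hdk | hdk
        · have h := (fact_ed i k).2.2.1; rw [hci, hdk] at h
          rw [show ε i - δ k = (1:ℝ) • ε i - (1:ℝ) • δ k by module]; exact h
        · have h := (fact_ed i k).1; rw [hci, hdk] at h
          rw [show ε i - δ k = (1:ℝ) • ε i + (-1:ℝ) • δ k by module]; exact h
        · exfalso; norm_num [F_add, F_sub, F_neg, F_smul, F_eps, F_delta, hci, hdk] at hvF
        · have h := (fact_ed i k).2.2.2; rw [hci, hdk] at h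
          rw [show ε i - δ k = (-1:ℝ) • δ k - (-1:ℝ) • ε i by module]; exact h
      · rcases hc i with hci | hci <;> rcases hd k with hdk | hdk
        · have h := (fact_ed i k).2.2.2; rw [hci, hdk] at h
          rw [show -ε i + δ k = (1:ℝ) • δ k - (1:ℝ) • ε i by module]; exact h
        · exfalso; norm_num [F_add, F_sub, F_neg, F_smul, F_eps, F_delta, hci, hdk] at hvF
        · have h := (fact_ed i k).1; rw [hci, hdk] at h
          rw [show -ε i + δ k = (-1:ℝ) • ε i + (1:ℝ) • δ k by module]; exact h
        · have h := (fact_ed i k).2.2.1; rw [hci, hdk] at h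
          rw [show -ε i + δ k = (-1:ℝ) • ε i - (-1:ℝ) • δ k by module]; exact h
      · rcases hc i with hci | hci <;> rcases hd k with hdk | hdk
        · exfalso; norm_num [F_add, F_sub, F_neg, F_smul, F_eps, F_delta, hci, hdk] at hvF
        · have h := (fact_ed i k).2.2.2; rw [hci, hdk] at h
          rw [show -ε i - δ k = (-1:ℝ) • δ k - (1:ℝ) • ε i by module]; exact h
        · have h := (fact_ed i k).2.2.1; rw [hci, hdk] at h
          rw [show -ε i - δ k = (-1:ℝ) • ε i - (1:ℝ) • δ k by module]; exact h
        · have h := (fact_ed i k).1; rw [hci, hdk] at h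
          rw [show -ε i - δ k = (-1:ℝ) • ε i + (-1:ℝ) • δ k by module]; exact h

end OspEven
namespace OspEven

variable {m n : ℕ}

lemma case2 (hn : 1 ≤ n) {P : Set (V m n)}
    (hPΔ : P ⊆ Δroot m n) (hPne : P ≠ Δroot m n)
    (total : ∀ v ∈ Δroot m n, v ∈ P ∨ -v ∈ P)
    (addP : ∀ α ∈ P, ∀ β ∈ P, α + β ∈ Δroot m n → α + β ∈ P)
    (NN : ∀ α ∈ P, ∀ β ∈ P, -α ∉ P → -β ∉ P → α + β ∉ Δroot m n)
    (hb : ∀ k : Fin n, (2:ℝ) • δ k ∈ P ∧ -((2:ℝ) • δ k) ∈ P) :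
    ∃ (i₀ : Fin m) (ζ : ℝ), Sg ζ ∧
      P = {v | v ∈ Δroot m n ∧
        0 ≤ F (fun i => if i = i₀ then ζ else 0) (fun _ => (0:ℝ)) v} := by
  classical
  have k0 : Fin n := ⟨0, hn⟩
  -- all δ-δ roots are in P
  have claimC : ∀ k l : Fin n, k ≠ l → δ k - δ l ∈ P → δ k + δ l ∈ P := by
    intro k l hkl h
    have hΔ : (δ k - δ l) + (2:ℝ) • δ l ∈ Δroot m n := by
      rw [show (δ k - δ l) + (2:ℝ) • δ l = (1:ℝ) • δ k + (1:ℝ) • δ l by module]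
      exact mem_dd hkl (Or.inl rfl) (Or.inl rfl)
    have h2 := addP _ h _ (hb l).1 hΔ
    rwa [show (δ k - δ l) + (2:ℝ) • δ l = δ k + δ l by module] at h2
  have fact_dd2 : ∀ k l : Fin n, k ≠ l → (δ k - δ l ∈ P) ∧ (δ k + δ l ∈ P) := by
    intro k l hkl
    have hΔ : δ k - δ l ∈ Δroot m n := by
      rw [show δ k - δ l = (1:ℝ) • δ k + (-1:ℝ) • δ l by module]
      exact mem_dd hkl (Or.inl rfl) (Or.inr rfl)
    rcases total _ hΔ with h | h
    · exact ⟨h, claimC k l hkl h⟩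
    · have h' : δ l - δ k ∈ P := by
        rwa [show -(δ k - δ l) = δ l - δ k by module] at h
      have hsum : δ l + δ k ∈ P := claimC l k hkl.symm h'
      have hΔ2 : (δ l + δ k) + -((2:ℝ) • δ l) ∈ Δroot m n := by
        rw [show (δ l + δ k) + -((2:ℝ) • δ l) = (1:ℝ) • δ k + (-1:ℝ) • δ l by module]
        exact mem_dd hkl (Or.inl rfl) (Or.inr rfl)
      have hsub := addP _ hsum _ (hb l).2 hΔ2
      rw [show (δ l + δ k) + -((2:ℝ) • δ l) = δ k - δ l by module] at hsub
      exact ⟨hsub, by rwa [show δ k + δ l = δ l + δ k by module]⟩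
  have hddsg : ∀ k l : Fin n, k ≠ l → ∀ a b : ℝ, Sg a → Sg b → a • δ k + b • δ l ∈ P := by
    intro k l hkl a b ha hb2
    rcases ha with rfl | rfl <;> rcases hb2 with rfl | rfl
    · rw [show (1:ℝ) • δ k + (1:ℝ) • δ l = δ k + δ l by module]
      exact (fact_dd2 k l hkl).2
    · rw [show (1:ℝ) • δ k + (-1:ℝ) • δ l = δ k - δ l by module]
      exact (fact_dd2 k l hkl).1
    · rw [show (-1:ℝ) • δ k + (1:ℝ) • δ l = δ l - δ k by module]
      exact (fact_dd2 l k hkl.symm).1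
    · have h := addP _ (fact_dd2 l k hkl.symm).1 _ (hb l).2 (by
        rw [show (δ l - δ k) + -((2:ℝ) • δ l) = (-1:ℝ) • δ k + (-1:ℝ) • δ l by module]
        exact mem_dd hkl (Or.inr rfl) (Or.inr rfl))
      rwa [show (δ l - δ k) + -((2:ℝ) • δ l) = (-1:ℝ) • δ k + (-1:ℝ) • δ l by module] at h
  have h2dsg : ∀ (k : Fin n) (a : ℝ), Sg a → a • ((2:ℝ) • δ k) ∈ P := by
    intro k a ha
    rcases ha with rfl | rfl
    · rw [show (1:ℝ) • ((2:ℝ) • δ k) = (2:ℝ) • δ k by module]; exact (hb k).1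
    · rw [show (-1:ℝ) • ((2:ℝ) • δ k) = -((2:ℝ) • δ k) by module]; exact (hb k).2
  -- per (i,k) state dichotomy
  have hstate : ∀ (i : Fin m) (k : Fin n),
      ((ε i + δ k ∈ P) ∧ (-(ε i + δ k) ∈ P) ∧ (ε i - δ k ∈ P) ∧ (-(ε i - δ k) ∈ P)) ∨
      (∃ a : ℝ, Sg a ∧ (a • ε i + δ k ∈ P) ∧ (a • ε i - δ k ∈ P) ∧
        (-(a • ε i + δ k) ∉ P) ∧ (-(a • ε i - δ k) ∉ P)) := by
    intro i k
    have hΔp : ε i + δ k ∈ Δroot m n := by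
      rw [show ε i + δ k = (1:ℝ) • ε i + (1:ℝ) • δ k by module]
      exact mem_ed i k (Or.inl rfl) (Or.inl rfl)
    by_cases h2 : ε i + δ k ∈ P <;> by_cases h1 : -(ε i + δ k) ∈ P
    · left
      have h3 : ε i - δ k ∈ P := by
        have h' := addP _ h2 _ (hb k).2 (by
          rw [show (ε i + δ k) + -((2:ℝ) • δ k) = (1:ℝ) • ε i + (-1:ℝ) • δ k by module]
          exact mem_ed i k (Or.inl rfl) (Or.inr rfl))
        rwa [show (ε i + δ k) + -((2:ℝ) • δ k) = ε i - δ k by module] at h'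
      have h4 : -(ε i - δ k) ∈ P := by
        have h' := addP _ h1 _ (hb k).1 (by
          rw [show -(ε i + δ k) + (2:ℝ) • δ k = (-1:ℝ) • ε i + (1:ℝ) • δ k by module]
          exact mem_ed i k (Or.inr rfl) (Or.inl rfl))
        rwa [show -(ε i + δ k) + (2:ℝ) • δ k = -(ε i - δ k) by module] at h'
      exact ⟨h2, h1, h3, h4⟩
    · right
      refine ⟨1, Or.inl rfl, by rwa [one_smul], ?_, ?_, ?_⟩
      · have h' := addP _ h2 _ (hb k).2 (by
          rw [show (ε i + δ k) + -((2:ℝ) • δ k) = (1:ℝ) • ε i + (-1:ℝ) • δ k by module]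
          exact mem_ed i k (Or.inl rfl) (Or.inr rfl))
        rw [show (ε i + δ k) + -((2:ℝ) • δ k) = ε i - δ k by module] at h'
        rwa [one_smul]
      · rw [one_smul]; exact h1
      · rw [one_smul]
        intro h'
        apply h1
        have h'' := addP _ h' _ (hb k).2 (by
          rw [show -(ε i - δ k) + -((2:ℝ) • δ k) = (-1:ℝ) • ε i + (-1:ℝ) • δ k by module]
          exact mem_ed i k (Or.inr rfl) (Or.inr rfl))
        rwa [show -(ε i - δ k) + -((2:ℝ) • δ k) = -(ε i + δ k) by module] at h''
    · right
      refine ⟨-1, Or.inr rfl, ?_, ?_, ?_, ?_⟩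
      · have h' := addP _ h1 _ (hb k).1 (by
          rw [show -(ε i + δ k) + (2:ℝ) • δ k = (-1:ℝ) • ε i + (1:ℝ) • δ k by module]
          exact mem_ed i k (Or.inr rfl) (Or.inl rfl))
        rwa [show -(ε i + δ k) + (2:ℝ) • δ k = (-1:ℝ) • ε i + δ k by module] at h'
      · rw [show (-1:ℝ) • ε i - δ k = -(ε i + δ k) by module]; exact h1
      · rw [show -((-1:ℝ) • ε i + δ k) = ε i - δ k by module]
        intro h'
        apply h2
        have h'' := addP _ h' _ (hb k).1 (by
          rw [show (ε i - δ k) + (2:ℝ) • δ k = (1:ℝ) • ε i + (1:ℝ) • δ k by module]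
          exact mem_ed i k (Or.inl rfl) (Or.inl rfl))
        rwa [show (ε i - δ k) + (2:ℝ) • δ k = ε i + δ k by module] at h''
      · rw [show -((-1:ℝ) • ε i - δ k) = ε i + δ k by module]; exact h2
    · exfalso
      rcases total _ hΔp with h | h
      · exact h2 h
      · exact h1 h
  -- per i, either all k are L-states, or a uniform N-state sign
  have hstate2 : ∀ i : Fin m,
      (∀ k, (ε i + δ k ∈ P) ∧ (-(ε i + δ k) ∈ P) ∧ (ε i - δ k ∈ P) ∧ (-(ε i - δ k) ∈ P)) ∨
      (∃ a : ℝ, Sg a ∧ ∀ k, (a • ε i + δ k ∈ P) ∧ (a • ε i - δ k ∈ P) ∧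
        (-(a • ε i + δ k) ∉ P) ∧ (-(a • ε i - δ k) ∉ P)) := by
    intro i
    by_cases hall : ∀ k, (ε i + δ k ∈ P) ∧ (-(ε i + δ k) ∈ P) ∧ (ε i - δ k ∈ P) ∧
        (-(ε i - δ k) ∈ P)
    · exact Or.inl hall
    · right
      obtain ⟨k1, hk1⟩ := not_forall.mp hall
      obtain ⟨a, ha, hN1⟩ := (hstate i k1).resolve_left hk1
      refine ⟨a, ha, fun k => ?_⟩
      rcases hstate i k with hL | ⟨a', ha', hN2⟩
      · exfalso
        by_cases hkk : k = k1
        · subst hkk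
          rcases ha with rfl | rfl
          · exact hN1.2.2.1 (by
              rw [show -((1:ℝ) • ε i + δ k) = -(ε i + δ k) by module]; exact hL.2.1)
          · exact hN1.2.2.1 (by
              rw [show -((-1:ℝ) • ε i + δ k) = ε i - δ k by module]; exact hL.2.2.1)
        · -- y = -(a•ε i) + δ k ∈ P from L-state, z = δ k1 - δ k ∈ P
          have hy : -(a • ε i) + δ k ∈ P := by
            rcases ha with rfl | rfl
            · rw [show -((1:ℝ) • ε i) + δ k = -(ε i - δ k) by module]; exact hL.2.2.2
            · rw [show -((-1:ℝ) • ε i) + δ k = ε i + δ k by module]; exact hL.1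
          have hz : δ k1 - δ k ∈ P := (fact_dd2 k1 k (Ne.symm hkk)).1
          have hsum := addP _ hy _ hz (by
            rw [show (-(a • ε i) + δ k) + (δ k1 - δ k) = (-a) • ε i + (1:ℝ) • δ k1 by module]
            exact mem_ed i k1 ha.neg (Or.inl rfl))
          rw [show (-(a • ε i) + δ k) + (δ k1 - δ k) = -(a • ε i - δ k1) by module] at hsum
          exact hN1.2.2.2 hsum
      · have haa : a' = a := by
          by_contra hne
          have ha'' : a' = -a := by
            rcases ha with rfl | rfl <;> rcases ha' with rfl | rfl <;> revert hne <;> norm_num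
          subst ha''
          by_cases hkk : k = k1
          · subst hkk
            refine NN _ hN1.1 _ hN2.1 hN1.2.2.1 hN2.2.2.1 ?_
            rw [show (a • ε i + δ k) + ((-a) • ε i + δ k) = (1:ℝ) • ((2:ℝ) • δ k) by module]
            exact mem_2d k (Or.inl rfl)
          · refine NN _ hN1.1 _ hN2.1 hN1.2.2.1 hN2.2.2.1 ?_
            rw [show (a • ε i + δ k1) + ((-a) • ε i + δ k) = (1:ℝ) • δ k1 + (1:ℝ) • δ k
              by module]
            exact mem_dd (Ne.symm hkk) (Or.inl rfl) (Or.inl rfl)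
        subst haa
        exact hN2
  -- at most one index in N-state
  have huniq : ∀ (i j : Fin m) (a b : ℝ), i ≠ j → Sg a → Sg b →
      (∀ k, (a • ε i + δ k ∈ P) ∧ (a • ε i - δ k ∈ P) ∧
        (-(a • ε i + δ k) ∉ P) ∧ (-(a • ε i - δ k) ∉ P)) →
      (∀ k, (b • ε j + δ k ∈ P) ∧ (b • ε j - δ k ∈ P) ∧
        (-(b • ε j + δ k) ∉ P) ∧ (-(b • ε j - δ k) ∉ P)) → False := by
    intro i j a b hij ha hb' hNi hNj
    refine NN _ (hNi k0).1 _ (hNj k0).2.1 (hNi k0).2.2.1 (hNj k0).2.2.2 ?_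
    rw [show (a • ε i + δ k0) + (b • ε j - δ k0) = a • ε i + b • ε j by module]
    exact mem_ee hij ha hb'
  by_cases hex : ∃ (i : Fin m) (a : ℝ), Sg a ∧ ∀ k,
      (a • ε i + δ k ∈ P) ∧ (a • ε i - δ k ∈ P) ∧
      (-(a • ε i + δ k) ∉ P) ∧ (-(a • ε i - δ k) ∉ P)
  · obtain ⟨i₀, ζ, hζ, hN⟩ := hex
    have hL : ∀ i, i ≠ i₀ → ∀ k,
        (ε i + δ k ∈ P) ∧ (-(ε i + δ k) ∈ P) ∧ (ε i - δ k ∈ P) ∧ (-(ε i - δ k) ∈ P) := by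
      intro i hi
      rcases hstate2 i with h | ⟨a, ha, hNa⟩
      · exact h
      · exact absurd (huniq i i₀ a ζ hi ha hζ hNa hN) (fun h => h)
    have hLsg : ∀ (i : Fin m), i ≠ i₀ → ∀ (k : Fin n) (a b : ℝ), Sg a → Sg b →
        a • ε i + b • δ k ∈ P := by
      intro i hi k a b ha hb2
      obtain ⟨h1, h2, h3, h4⟩ := hL i hi k
      rcases ha with rfl | rfl <;> rcases hb2 with rfl | rfl
      · rw [show (1:ℝ) • ε i + (1:ℝ) • δ k = ε i + δ k by module]; exact h1
      · rw [show (1:ℝ) • ε i + (-1:ℝ) • δ k = ε i - δ k by module]; exact h3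
      · rw [show (-1:ℝ) • ε i + (1:ℝ) • δ k = -(ε i - δ k) by module]; exact h4
      · rw [show (-1:ℝ) • ε i + (-1:ℝ) • δ k = -(ε i + δ k) by module]; exact h2
    have hNee : ∀ j, j ≠ i₀ → ∀ b : ℝ, Sg b →
        (ζ • ε i₀ + b • ε j ∈ P) ∧ (-(ζ • ε i₀ + b • ε j) ∉ P) := by
      intro j hj b hb2
      constructor
      · have h := addP _ (hN k0).1 _ (hLsg j hj k0 b (-1) hb2 (Or.inr rfl)) (by
          rw [show (ζ • ε i₀ + δ k0) + (b • ε j + (-1:ℝ) • δ k0) = ζ • ε i₀ + b • ε j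
            by module]
          exact mem_ee (fun h => hj h.symm) hζ hb2)
        rwa [show (ζ • ε i₀ + δ k0) + (b • ε j + (-1:ℝ) • δ k0) = ζ • ε i₀ + b • ε j
          by module] at h
      · intro h
        have h2 := addP _ h _ (hLsg j hj k0 b 1 hb2 (Or.inl rfl)) (by
          rw [show -(ζ • ε i₀ + b • ε j) + (b • ε j + (1:ℝ) • δ k0) =
            (-ζ) • ε i₀ + (1:ℝ) • δ k0 by module]
          exact mem_ed i₀ k0 hζ.neg (Or.inl rfl))
        rw [show -(ζ • ε i₀ + b • ε j) + (b • ε j + (1:ℝ) • δ k0) =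
          -(ζ • ε i₀ - δ k0) by module] at h2
        exact (hN k0).2.2.2 h2
    have hLee : ∀ i j, i ≠ i₀ → j ≠ i₀ → i ≠ j → ∀ a b : ℝ, Sg a → Sg b →
        a • ε i + b • ε j ∈ P := by
      intro i j hi hj hij a b ha hb2
      have h := addP _ (hLsg i hi k0 a (-1) ha (Or.inr rfl))
        _ (hLsg j hj k0 b 1 hb2 (Or.inl rfl)) (by
          rw [show (a • ε i + (-1:ℝ) • δ k0) + (b • ε j + (1:ℝ) • δ k0) =
            a • ε i + b • ε j by module]
          exact mem_ee hij ha hb2)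
      rwa [show (a • ε i + (-1:ℝ) • δ k0) + (b • ε j + (1:ℝ) • δ k0) =
        a • ε i + b • ε j by module] at h
    refine ⟨i₀, ζ, hζ, ?_⟩
    ext v
    constructor
    · intro hv
      refine ⟨hPΔ hv, ?_⟩
      rcases hPΔ hv with ((h | h) | h) | h
      · obtain ⟨i, j, hij, rfl | rfl | rfl | rfl⟩ := h
        · by_cases hi : i = i₀
          · have hj : j ≠ i₀ := fun h' => hij (hi.trans h'.symm)
            rcases hζ with hz | hz
            · norm_num [F_add, F_sub, F_neg, F_smul, F_eps, F_delta, hi, hj, hz]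
            · exfalso
              refine (hNee j hj (-1:ℝ) (Or.inr rfl)).2 ?_
              rw [show -(ζ • ε i₀ + (-1:ℝ) • ε j) = ε i + ε j by rw [hz, ← hi]; module]
              exact hv
          · by_cases hj : j = i₀
            · rcases hζ with hz | hz
              · norm_num [F_add, F_sub, F_neg, F_smul, F_eps, F_delta, hi, hj, hz]
              · exfalso
                refine (hNee i hi (-1:ℝ) (Or.inr rfl)).2 ?_
                rw [show -(ζ • ε i₀ + (-1:ℝ) • ε i) = ε i + ε j by rw [hz, ← hj]; module]
                exact hv
            · norm_num [F_add, F_sub, F_neg, F_smul, F_eps, F_delta, hi, hj]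
        · by_cases hi : i = i₀
          · have hj : j ≠ i₀ := fun h' => hij (hi.trans h'.symm)
            rcases hζ with hz | hz
            · norm_num [F_add, F_sub, F_neg, F_smul, F_eps, F_delta, hi, hj, hz]
            · exfalso
              refine (hNee j hj (1:ℝ) (Or.inl rfl)).2 ?_
              rw [show -(ζ • ε i₀ + (1:ℝ) • ε j) = ε i - ε j by rw [hz, ← hi]; module]
              exact hv
          · by_cases hj : j = i₀
            · rcases hζ with hz | hz
              · exfalso
                refine (hNee i hi (-1:ℝ) (Or.inr rfl)).2 ?_
                rw [show -(ζ • ε i₀ + (-1:ℝ) • ε i) = ε i - ε j by rw [hz, ← hj]; module]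
                exact hv
              · norm_num [F_add, F_sub, F_neg, F_smul, F_eps, F_delta, hi, hj, hz]
            · norm_num [F_add, F_sub, F_neg, F_smul, F_eps, F_delta, hi, hj]
        · by_cases hi : i = i₀
          · have hj : j ≠ i₀ := fun h' => hij (hi.trans h'.symm)
            rcases hζ with hz | hz
            · exfalso
              refine (hNee j hj (-1:ℝ) (Or.inr rfl)).2 ?_
              rw [show -(ζ • ε i₀ + (-1:ℝ) • ε j) = -ε i + ε j by rw [hz, ← hi]; module]
              exact hv
            · norm_num [F_add, F_sub, F_neg, F_smul, F_eps, F_delta, hi, hj, hz]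
          · by_cases hj : j = i₀
            · rcases hζ with hz | hz
              · norm_num [F_add, F_sub, F_neg, F_smul, F_eps, F_delta, hi, hj, hz]
              · exfalso
                refine (hNee i hi (1:ℝ) (Or.inl rfl)).2 ?_
                rw [show -(ζ • ε i₀ + (1:ℝ) • ε i) = -ε i + ε j by rw [hz, ← hj]; module]
                exact hv
            · norm_num [F_add, F_sub, F_neg, F_smul, F_eps, F_delta, hi, hj]
        · by_cases hi : i = i₀
          · have hj : j ≠ i₀ := fun h' => hij (hi.trans h'.symm)
            rcases hζ with hz | hz
            · exfalso
              refine (hNee j hj (1:ℝ) (Or.inl rfl)).2 ?_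
              rw [show -(ζ • ε i₀ + (1:ℝ) • ε j) = -ε i - ε j by rw [hz, ← hi]; module]
              exact hv
            · norm_num [F_add, F_sub, F_neg, F_smul, F_eps, F_delta, hi, hj, hz]
          · by_cases hj : j = i₀
            · rcases hζ with hz | hz
              · exfalso
                refine (hNee i hi (1:ℝ) (Or.inl rfl)).2 ?_
                rw [show -(ζ • ε i₀ + (1:ℝ) • ε i) = -ε i - ε j by rw [hz, ← hj]; module]
                exact hv
              · norm_num [F_add, F_sub, F_neg, F_smul, F_eps, F_delta, hi, hj, hz]
            · norm_num [F_add, F_sub, F_neg, F_smul, F_eps, F_delta, hi, hj]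
      · obtain ⟨k, l, hkl, rfl | rfl | rfl | rfl⟩ := h <;>
          norm_num [F_add, F_sub, F_neg, F_smul, F_eps, F_delta]
      · obtain ⟨k, rfl | rfl⟩ := h <;>
          norm_num [F_add, F_sub, F_neg, F_smul, F_eps, F_delta]
      · obtain ⟨i, k, rfl | rfl | rfl | rfl⟩ := h
        · by_cases hi : i = i₀
          · rcases hζ with hz | hz
            · norm_num [F_add, F_sub, F_neg, F_smul, F_eps, F_delta, hi, hz]
            · exfalso
              refine (hN k).2.2.2 ?_
              rw [show -(ζ • ε i₀ - δ k) = ε i + δ k by rw [hz, ← hi]; module]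
              exact hv
          · norm_num [F_add, F_sub, F_neg, F_smul, F_eps, F_delta, hi]
        · by_cases hi : i = i₀
          · rcases hζ with hz | hz
            · norm_num [F_add, F_sub, F_neg, F_smul, F_eps, F_delta, hi, hz]
            · exfalso
              refine (hN k).2.2.1 ?_
              rw [show -(ζ • ε i₀ + δ k) = ε i - δ k by rw [hz, ← hi]; module]
              exact hv
          · norm_num [F_add, F_sub, F_neg, F_smul, F_eps, F_delta, hi]
        · by_cases hi : i = i₀
          · rcases hζ with hz | hz
            · exfalso
              refine (hN k).2.2.2 ?_
              rw [show -(ζ • ε i₀ - δ k) = -ε i + δ k by rw [hz, ← hi]; module]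
              exact hv
            · norm_num [F_add, F_sub, F_neg, F_smul, F_eps, F_delta, hi, hz]
          · norm_num [F_add, F_sub, F_neg, F_smul, F_eps, F_delta, hi]
        · by_cases hi : i = i₀
          · rcases hζ with hz | hz
            · exfalso
              refine (hN k).2.2.1 ?_
              rw [show -(ζ • ε i₀ + δ k) = -ε i - δ k by rw [hz, ← hi]; module]
              exact hv
            · norm_num [F_add, F_sub, F_neg, F_smul, F_eps, F_delta, hi, hz]
          · norm_num [F_add, F_sub, F_neg, F_smul, F_eps, F_delta, hi]
    · rintro ⟨hvΔ, hvF⟩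
      rcases hvΔ with ((h | h) | h) | h
      · obtain ⟨i, j, hij, rfl | rfl | rfl | rfl⟩ := h
        · by_cases hi : i = i₀
          · have hj : j ≠ i₀ := fun h' => hij (hi.trans h'.symm)
            rcases hζ with hz | hz
            · rw [show ε i + ε j = ζ • ε i₀ + (1:ℝ) • ε j by rw [hz, ← hi]; module]
              exact (hNee j hj (1:ℝ) (Or.inl rfl)).1
            · exfalso
              norm_num [F_add, F_sub, F_neg, F_smul, F_eps, F_delta, hi, hj, hz] at hvF
          · by_cases hj : j = i₀
            · rcases hζ with hz | hz
              · rw [show ε i + ε j = ζ • ε i₀ + (1:ℝ) • ε i by rw [hz, ← hj]; module]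
                exact (hNee i hi (1:ℝ) (Or.inl rfl)).1
              · exfalso
                norm_num [F_add, F_sub, F_neg, F_smul, F_eps, F_delta, hi, hj, hz] at hvF
            · rw [show ε i + ε j = (1:ℝ) • ε i + (1:ℝ) • ε j by module]
              exact hLee i j hi hj hij (1:ℝ) (1:ℝ) (Or.inl rfl) (Or.inl rfl)
        · by_cases hi : i = i₀
          · have hj : j ≠ i₀ := fun h' => hij (hi.trans h'.symm)
            rcases hζ with hz | hz
            · rw [show ε i - ε j = ζ • ε i₀ + (-1:ℝ) • ε j by rw [hz, ← hi]; module]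
              exact (hNee j hj (-1:ℝ) (Or.inr rfl)).1
            · exfalso
              norm_num [F_add, F_sub, F_neg, F_smul, F_eps, F_delta, hi, hj, hz] at hvF
          · by_cases hj : j = i₀
            · rcases hζ with hz | hz
              · exfalso
                norm_num [F_add, F_sub, F_neg, F_smul, F_eps, F_delta, hi, hj, hz] at hvF
              · rw [show ε i - ε j = ζ • ε i₀ + (1:ℝ) • ε i by rw [hz, ← hj]; module]
                exact (hNee i hi (1:ℝ) (Or.inl rfl)).1
            · rw [show ε i - ε j = (1:ℝ) • ε i + (-1:ℝ) • ε j by module]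
              exact hLee i j hi hj hij (1:ℝ) (-1:ℝ) (Or.inl rfl) (Or.inr rfl)
        · by_cases hi : i = i₀
          · have hj : j ≠ i₀ := fun h' => hij (hi.trans h'.symm)
            rcases hζ with hz | hz
            · exfalso
              norm_num [F_add, F_sub, F_neg, F_smul, F_eps, F_delta, hi, hj, hz] at hvF
            · rw [show -ε i + ε j = ζ • ε i₀ + (1:ℝ) • ε j by rw [hz, ← hi]; module]
              exact (hNee j hj (1:ℝ) (Or.inl rfl)).1
          · by_cases hj : j = i₀
            · rcases hζ with hz | hz
              · rw [show -ε i + ε j = ζ • ε i₀ + (-1:ℝ) • ε i by rw [hz, ← hj]; module]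
                exact (hNee i hi (-1:ℝ) (Or.inr rfl)).1
              · exfalso
                norm_num [F_add, F_sub, F_neg, F_smul, F_eps, F_delta, hi, hj, hz] at hvF
            · rw [show -ε i + ε j = (-1:ℝ) • ε i + (1:ℝ) • ε j by module]
              exact hLee i j hi hj hij (-1:ℝ) (1:ℝ) (Or.inr rfl) (Or.inl rfl)
        · by_cases hi : i = i₀
          · have hj : j ≠ i₀ := fun h' => hij (hi.trans h'.symm)
            rcases hζ with hz | hz
            · exfalso
              norm_num [F_add, F_sub, F_neg, F_smul, F_eps, F_delta, hi, hj, hz] at hvF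
            · rw [show -ε i - ε j = ζ • ε i₀ + (-1:ℝ) • ε j by rw [hz, ← hi]; module]
              exact (hNee j hj (-1:ℝ) (Or.inr rfl)).1
          · by_cases hj : j = i₀
            · rcases hζ with hz | hz
              · exfalso
                norm_num [F_add, F_sub, F_neg, F_smul, F_eps, F_delta, hi, hj, hz] at hvF
              · rw [show -ε i - ε j = ζ • ε i₀ + (-1:ℝ) • ε i by rw [hz, ← hj]; module]
                exact (hNee i hi (-1:ℝ) (Or.inr rfl)).1
            · rw [show -ε i - ε j = (-1:ℝ) • ε i + (-1:ℝ) • ε j by module]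
              exact hLee i j hi hj hij (-1:ℝ) (-1:ℝ) (Or.inr rfl) (Or.inr rfl)
      · obtain ⟨k, l, hkl, rfl | rfl | rfl | rfl⟩ := h
        · rw [show δ k + δ l = (1:ℝ) • δ k + (1:ℝ) • δ l by module]
          exact hddsg k l hkl (1:ℝ) (1:ℝ) (Or.inl rfl) (Or.inl rfl)
        · rw [show δ k - δ l = (1:ℝ) • δ k + (-1:ℝ) • δ l by module]
          exact hddsg k l hkl (1:ℝ) (-1:ℝ) (Or.inl rfl) (Or.inr rfl)
        · rw [show -δ k + δ l = (-1:ℝ) • δ k + (1:ℝ) • δ l by module]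
          exact hddsg k l hkl (-1:ℝ) (1:ℝ) (Or.inr rfl) (Or.inl rfl)
        · rw [show -δ k - δ l = (-1:ℝ) • δ k + (-1:ℝ) • δ l by module]
          exact hddsg k l hkl (-1:ℝ) (-1:ℝ) (Or.inr rfl) (Or.inr rfl)
      · obtain ⟨k, rfl | rfl⟩ := h
        · exact (hb k).1
        · exact (hb k).2
      · obtain ⟨i, k, rfl | rfl | rfl | rfl⟩ := h
        · by_cases hi : i = i₀
          · rcases hζ with hz | hz
            · rw [show ε i + δ k = ζ • ε i₀ + δ k by rw [hz, ← hi]; module]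
              exact (hN k).1
            · exfalso
              norm_num [F_add, F_sub, F_neg, F_smul, F_eps, F_delta, hi, hz] at hvF
          · rw [show ε i + δ k = (1:ℝ) • ε i + (1:ℝ) • δ k by module]
            exact hLsg i hi k (1:ℝ) (1:ℝ) (Or.inl rfl) (Or.inl rfl)
        · by_cases hi : i = i₀
          · rcases hζ with hz | hz
            · rw [show ε i - δ k = ζ • ε i₀ - δ k by rw [hz, ← hi]; module]
              exact (hN k).2.1
            · exfalso
              norm_num [F_add, F_sub, F_neg, F_smul, F_eps, F_delta, hi, hz] at hvF
          · rw [show ε i - δ k = (1:ℝ) • ε i + (-1:ℝ) • δ k by module]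
            exact hLsg i hi k (1:ℝ) (-1:ℝ) (Or.inl rfl) (Or.inr rfl)
        · by_cases hi : i = i₀
          · rcases hζ with hz | hz
            · exfalso
              norm_num [F_add, F_sub, F_neg, F_smul, F_eps, F_delta, hi, hz] at hvF
            · rw [show -ε i + δ k = ζ • ε i₀ + δ k by rw [hz, ← hi]; module]
              exact (hN k).1
          · rw [show -ε i + δ k = (-1:ℝ) • ε i + (1:ℝ) • δ k by module]
            exact hLsg i hi k (-1:ℝ) (1:ℝ) (Or.inr rfl) (Or.inl rfl)
        · by_cases hi : i = i₀
          · rcases hζ with hz | hz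
            · exfalso
              norm_num [F_add, F_sub, F_neg, F_smul, F_eps, F_delta, hi, hz] at hvF
            · rw [show -ε i - δ k = ζ • ε i₀ - δ k by rw [hz, ← hi]; module]
              exact (hN k).2.1
          · rw [show -ε i - δ k = (-1:ℝ) • ε i + (-1:ℝ) • δ k by module]
            exact hLsg i hi k (-1:ℝ) (-1:ℝ) (Or.inr rfl) (Or.inr rfl)
  · exfalso
    apply hPne
    have hall : ∀ (i : Fin m) (k : Fin n),
        (ε i + δ k ∈ P) ∧ (-(ε i + δ k) ∈ P) ∧ (ε i - δ k ∈ P) ∧ (-(ε i - δ k) ∈ P) := by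
      intro i k
      rcases hstate2 i with h | ⟨a, ha, hNa⟩
      · exact h k
      · exact absurd ⟨i, a, ha, hNa⟩ hex
    have hLsg : ∀ (i : Fin m) (k : Fin n) (a b : ℝ), Sg a → Sg b →
        a • ε i + b • δ k ∈ P := by
      intro i k a b ha hb2
      obtain ⟨h1, h2, h3, h4⟩ := hall i k
      rcases ha with rfl | rfl <;> rcases hb2 with rfl | rfl
      · rw [show (1:ℝ) • ε i + (1:ℝ) • δ k = ε i + δ k by module]; exact h1
      · rw [show (1:ℝ) • ε i + (-1:ℝ) • δ k = ε i - δ k by module]; exact h3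
      · rw [show (-1:ℝ) • ε i + (1:ℝ) • δ k = -(ε i - δ k) by module]; exact h4
      · rw [show (-1:ℝ) • ε i + (-1:ℝ) • δ k = -(ε i + δ k) by module]; exact h2
    have heesg : ∀ (i j : Fin m), i ≠ j → ∀ a b : ℝ, Sg a → Sg b →
        a • ε i + b • ε j ∈ P := by
      intro i j hij a b ha hb2
      have h := addP _ (hLsg i k0 a (-1) ha (Or.inr rfl))
        _ (hLsg j k0 b 1 hb2 (Or.inl rfl)) (by
          rw [show (a • ε i + (-1:ℝ) • δ k0) + (b • ε j + (1:ℝ) • δ k0) =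
            a • ε i + b • ε j by module]
          exact mem_ee hij ha hb2)
      rwa [show (a • ε i + (-1:ℝ) • δ k0) + (b • ε j + (1:ℝ) • δ k0) =
        a • ε i + b • ε j by module] at h
    apply Set.Subset.antisymm hPΔ
    intro v hv
    rcases hv with ((h | h) | h) | h
    · obtain ⟨i, j, hij, rfl | rfl | rfl | rfl⟩ := h
      · rw [show ε i + ε j = (1:ℝ) • ε i + (1:ℝ) • ε j by module]
        exact heesg i j hij 1 1 (Or.inl rfl) (Or.inl rfl)
      · rw [show ε i - ε j = (1:ℝ) • ε i + (-1:ℝ) • ε j by module]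
        exact heesg i j hij 1 (-1) (Or.inl rfl) (Or.inr rfl)
      · rw [show -ε i + ε j = (-1:ℝ) • ε i + (1:ℝ) • ε j by module]
        exact heesg i j hij (-1) 1 (Or.inr rfl) (Or.inl rfl)
      · rw [show -ε i - ε j = (-1:ℝ) • ε i + (-1:ℝ) • ε j by module]
        exact heesg i j hij (-1) (-1) (Or.inr rfl) (Or.inr rfl)
    · obtain ⟨k, l, hkl, rfl | rfl | rfl | rfl⟩ := h
      · rw [show δ k + δ l = (1:ℝ) • δ k + (1:ℝ) • δ l by module]
        exact hddsg k l hkl 1 1 (Or.inl rfl) (Or.inl rfl)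
      · rw [show δ k - δ l = (1:ℝ) • δ k + (-1:ℝ) • δ l by module]
        exact hddsg k l hkl 1 (-1) (Or.inl rfl) (Or.inr rfl)
      · rw [show -δ k + δ l = (-1:ℝ) • δ k + (1:ℝ) • δ l by module]
        exact hddsg k l hkl (-1) 1 (Or.inr rfl) (Or.inl rfl)
      · rw [show -δ k - δ l = (-1:ℝ) • δ k + (-1:ℝ) • δ l by module]
        exact hddsg k l hkl (-1) (-1) (Or.inr rfl) (Or.inr rfl)
    · obtain ⟨k, rfl | rfl⟩ := h
      · exact (hb k).1
      · exact (hb k).2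
    · obtain ⟨i, k, rfl | rfl | rfl | rfl⟩ := h
      · rw [show ε i + δ k = (1:ℝ) • ε i + (1:ℝ) • δ k by module]
        exact hLsg i k 1 1 (Or.inl rfl) (Or.inl rfl)
      · rw [show ε i - δ k = (1:ℝ) • ε i + (-1:ℝ) • δ k by module]
        exact hLsg i k 1 (-1) (Or.inl rfl) (Or.inr rfl)
      · rw [show -ε i + δ k = (-1:ℝ) • ε i + (1:ℝ) • δ k by module]
        exact hLsg i k (-1) 1 (Or.inr rfl) (Or.inl rfl)
      · rw [show -ε i - δ k = (-1:ℝ) • ε i + (-1:ℝ) • δ k by module]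
        exact hLsg i k (-1) (-1) (Or.inr rfl) (Or.inr rfl)

end OspEven
namespace OspEven

variable {m n : ℕ}

lemma act_injective {σ : Equiv.Perm (Fin m)} {τ : Equiv.Perm (Fin n)} {s : Fin m → ℝ}
    {t : Fin n → ℝ} (hs : ∀ i, Sg (s i)) (ht : ∀ k, Sg (t k)) :
    Function.Injective (act σ τ s t) :=
  Function.LeftInverse.injective (act_leftinv hs ht)

lemma act_mem_iff {σ : Equiv.Perm (Fin m)} {τ : Equiv.Perm (Fin n)} {s : Fin m → ℝ}
    {t : Fin n → ℝ} (hs : ∀ i, Sg (s i)) (ht : ∀ k, Sg (t k)) {v : V m n} :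
    act σ τ s t v ∈ Δroot m n ↔ v ∈ Δroot m n := by
  constructor
  · intro h
    have h2 := act_mem (σ := σ.symm) (τ := τ.symm) (s := fun i => s (σ i))
      (t := fun k => t (τ k)) (fun i => hs (σ i)) (fun k => ht (τ k)) h
    rwa [act_leftinv hs ht] at h2
  · exact act_mem hs ht

lemma mem_iff_of_image {σ : Equiv.Perm (Fin m)} {τ : Equiv.Perm (Fin n)} {s : Fin m → ℝ}
    {t : Fin n → ℝ} (hs : ∀ i, Sg (s i)) (ht : ∀ k, Sg (t k)) {P B : Set (V m n)}
    (heq : act σ τ s t '' P = B) (v : V m n) : v ∈ P ↔ act σ τ s t v ∈ B := by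
  rw [← heq]
  exact ((act_injective hs ht).mem_set_image).symm

lemma prod_theta (hm : 2 ≤ m) :
    (∏ i : Fin m, (if (i:ℕ) = m - 1 then (-1:ℝ) else 1)) = -1 := by
  have hlt : m - 1 < m := by omega
  have h : ∀ i : Fin m, (if (i:ℕ) = m - 1 then (-1:ℝ) else 1) =
      (if i = (⟨m - 1, hlt⟩ : Fin m) then (-1:ℝ) else 1) := by
    intro i
    by_cases hi : (i:ℕ) = m - 1
    · rw [if_pos hi, if_pos (Fin.ext hi)]
    · rw [if_neg hi, if_neg (fun h' => hi (by rw [h']))]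
  rw [Finset.prod_congr rfl (fun i _ => h i), Finset.prod_ite_eq']
  simp

lemma CLASS (hn : 1 ≤ n) {P : Set (V m n)} (hP : IsCominuscule (Δroot m n) P) :
    (∃ c : Fin m → ℝ, ∃ d : Fin n → ℝ, (∀ i, Sg (c i)) ∧ (∀ k, Sg (d k)) ∧
      P = {v | v ∈ Δroot m n ∧ 0 ≤ F c d v}) ∨
    (∃ (i₀ : Fin m) (ζ : ℝ), Sg ζ ∧
      P = {v | v ∈ Δroot m n ∧
        0 ≤ F (fun i => if i = i₀ then ζ else 0) (fun _ => (0:ℝ)) v}) := by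
  classical
  obtain ⟨⟨hss, hunion, addP⟩, hcom⟩ := hP
  have hPΔ : P ⊆ Δroot m n := hss.1
  have hPne : P ≠ Δroot m n := hss.2.imp fun h => h ▸ Set.Subset.rfl
  have total : ∀ v ∈ Δroot m n, v ∈ P ∨ -v ∈ P := by
    intro v hv
    rw [hunion] at hv
    rcases hv with h | h
    · exact Or.inl h
    · exact Or.inr (by rwa [Set.mem_neg] at h)
  have NN : ∀ α ∈ P, ∀ β ∈ P, -α ∉ P → -β ∉ P → α + β ∉ Δroot m n := by
    intro α hα β hβ hα' hβ'
    exact hcom α ⟨hα, fun h => hα' (by rwa [Set.mem_neg] at h)⟩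
      β ⟨hβ, fun h => hβ' (by rwa [Set.mem_neg] at h)⟩
  -- propagation of `both signs of a long root lie in P`
  have prop2 : ∀ k l : Fin n, ((2:ℝ) • δ k ∈ P ∧ -((2:ℝ) • δ k) ∈ P) →
      ((2:ℝ) • δ l ∈ P ∧ -((2:ℝ) • δ l) ∈ P) := by
    intro k l ⟨hk1, hk2⟩
    by_cases hkl : k = l
    · exact hkl ▸ ⟨hk1, hk2⟩
    · have hΔsub : δ k - δ l ∈ Δroot m n := by
        rw [show δ k - δ l = (1:ℝ) • δ k + (-1:ℝ) • δ l by module]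
        exact mem_dd hkl (Or.inl rfl) (Or.inr rfl)
      have hΔ2l : (2:ℝ) • δ l ∈ Δroot m n := by
        rw [show (2:ℝ) • δ l = (1:ℝ) • ((2:ℝ) • δ l) by module]
        exact mem_2d l (Or.inl rfl)
      rcases total _ hΔsub with hA | hB
      · -- δ k - δ l ∈ P
        have h1 : -δ k - δ l ∈ P := by
          have h := addP _ hA _ hk2 (by
            rw [show (δ k - δ l) + -((2:ℝ) • δ k) = (-1:ℝ) • δ k + (-1:ℝ) • δ l by module]
            exact mem_dd hkl (Or.inr rfl) (Or.inr rfl))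
          rwa [show (δ k - δ l) + -((2:ℝ) • δ k) = -δ k - δ l by module] at h
        rcases total _ hΔ2l with h2l | h2l
        · refine ⟨h2l, ?_⟩
          have h := addP _ h1 _ hA (by
            rw [show (-δ k - δ l) + (δ k - δ l) = (-1:ℝ) • ((2:ℝ) • δ l) by module]
            exact mem_2d l (Or.inr rfl))
          rwa [show (-δ k - δ l) + (δ k - δ l) = -((2:ℝ) • δ l) by module] at h
        · by_cases hpl : δ k + δ l ∈ P
          · have h3 : -δ k + δ l ∈ P := by
              have h := addP _ hpl _ hk2 (by
                rw [show (δ k + δ l) + -((2:ℝ) • δ k) = (-1:ℝ) • δ k + (1:ℝ) • δ l by module]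
                exact mem_dd hkl (Or.inr rfl) (Or.inl rfl))
              rwa [show (δ k + δ l) + -((2:ℝ) • δ k) = -δ k + δ l by module] at h
            refine ⟨?_, h2l⟩
            have h := addP _ hpl _ h3 (by
              rw [show (δ k + δ l) + (-δ k + δ l) = (1:ℝ) • ((2:ℝ) • δ l) by module]
              exact mem_2d l (Or.inl rfl))
            rwa [show (δ k + δ l) + (-δ k + δ l) = (2:ℝ) • δ l by module] at h
          · exfalso
            have hmk : -(δ k - δ l) ∉ P := by
              intro h'
              apply hpl
              have h := addP _ h' _ hk1 (by
                rw [show -(δ k - δ l) + (2:ℝ) • δ k = (1:ℝ) • δ k + (1:ℝ) • δ l by module]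
                exact mem_dd hkl (Or.inl rfl) (Or.inl rfl))
              rwa [show -(δ k - δ l) + (2:ℝ) • δ k = δ k + δ l by module] at h
            have hmk2 : -(-δ k - δ l) ∉ P := by
              intro h'
              apply hpl
              rwa [show -(-δ k - δ l) = δ k + δ l by module] at h'
            refine NN _ hA _ h1 hmk hmk2 ?_
            rw [show (δ k - δ l) + (-δ k - δ l) = (-1:ℝ) • ((2:ℝ) • δ l) by module]
            exact mem_2d l (Or.inr rfl)
      · -- -(δ k - δ l) ∈ P
        have hB' : -δ k + δ l ∈ P := by
          rwa [show -(δ k - δ l) = -δ k + δ l by module] at hB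
        have h1 : δ k + δ l ∈ P := by
          have h := addP _ hB' _ hk1 (by
            rw [show (-δ k + δ l) + (2:ℝ) • δ k = (1:ℝ) • δ k + (1:ℝ) • δ l by module]
            exact mem_dd hkl (Or.inl rfl) (Or.inl rfl))
          rwa [show (-δ k + δ l) + (2:ℝ) • δ k = δ k + δ l by module] at h
        rcases total _ hΔ2l with h2l | h2l
        · refine ⟨h2l, ?_⟩
          by_cases hml : δ k - δ l ∈ P
          · have h4 : -δ k - δ l ∈ P := by
              have h := addP _ hml _ hk2 (by
                rw [show (δ k - δ l) + -((2:ℝ) • δ k) = (-1:ℝ) • δ k + (-1:ℝ) • δ l by module]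
                exact mem_dd hkl (Or.inr rfl) (Or.inr rfl))
              rwa [show (δ k - δ l) + -((2:ℝ) • δ k) = -δ k - δ l by module] at h
            have h := addP _ h4 _ hml (by
              rw [show (-δ k - δ l) + (δ k - δ l) = (-1:ℝ) • ((2:ℝ) • δ l) by module]
              exact mem_2d l (Or.inr rfl))
            rwa [show (-δ k - δ l) + (δ k - δ l) = -((2:ℝ) • δ l) by module] at h
          · exfalso
            have hm1 : -(δ k + δ l) ∉ P := by
              intro h'
              apply hml
              have h := addP _ h' _ hk1 (by
                rw [show -(δ k + δ l) + (2:ℝ) • δ k = (1:ℝ) • δ k + (-1:ℝ) • δ l by module]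
                exact mem_dd hkl (Or.inl rfl) (Or.inr rfl))
              rwa [show -(δ k + δ l) + (2:ℝ) • δ k = δ k - δ l by module] at h
            have hm2 : -(-δ k + δ l) ∉ P := by
              intro h'
              apply hml
              rwa [show -(-δ k + δ l) = δ k - δ l by module] at h'
            refine NN _ h1 _ hB' hm1 hm2 ?_
            rw [show (δ k + δ l) + (-δ k + δ l) = (1:ℝ) • ((2:ℝ) • δ l) by module]
            exact mem_2d l (Or.inl rfl)
        · refine ⟨?_, h2l⟩
          have h3 : δ k - δ l ∈ P := by
            have h := addP _ h1 _ h2l (by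
              rw [show (δ k + δ l) + -((2:ℝ) • δ l) = (1:ℝ) • δ k + (-1:ℝ) • δ l by module]
              exact mem_dd hkl (Or.inl rfl) (Or.inr rfl))
            rwa [show (δ k + δ l) + -((2:ℝ) • δ l) = δ k - δ l by module] at h
          have h4 : -δ k - δ l ∈ P := by
            have h := addP _ h3 _ hk2 (by
              rw [show (δ k - δ l) + -((2:ℝ) • δ k) = (-1:ℝ) • δ k + (-1:ℝ) • δ l by module]
              exact mem_dd hkl (Or.inr rfl) (Or.inr rfl))
            rwa [show (δ k - δ l) + -((2:ℝ) • δ k) = -δ k - δ l by module] at h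
          have h := addP _ hB' _ h1 (by
            rw [show (-δ k + δ l) + (δ k + δ l) = (1:ℝ) • ((2:ℝ) • δ l) by module]
            exact mem_2d l (Or.inl rfl))
          rwa [show (-δ k + δ l) + (δ k + δ l) = (2:ℝ) • δ l by module] at h
  by_cases hcase : ∀ k : Fin n, ¬((2:ℝ) • δ k ∈ P ∧ -((2:ℝ) • δ k) ∈ P)
  · exact Or.inl (case1 hn hPΔ total addP NN hcase)
  · right
    have hboth : ∀ k : Fin n, (2:ℝ) • δ k ∈ P ∧ -((2:ℝ) • δ k) ∈ P := by
      obtain ⟨k1, hk1⟩ := not_forall.mp hcase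
      intro k
      exact prop2 k1 k (not_not.mp hk1)
    exact case2 hn hPΔ hPne total addP NN hboth

end OspEven
namespace OspEven

variable {m n : ℕ}

lemma F_congr {c c' : Fin m → ℝ} {d d' : Fin n → ℝ} (hc : c = c') (hd : d = d')
    (v : V m n) : F c d v = F c' d' v := by rw [hc, hd]

lemma two_delta_mem (k : Fin n) : (2:ℝ) • δ k ∈ Δroot m n := by
  rw [show (2:ℝ) • δ k = (1:ℝ) • ((2:ℝ) • δ k) by module]
  exact mem_2d k (Or.inl rfl)

lemma eps_delta_mem (i : Fin m) (k : Fin n) : ε i + δ k ∈ Δroot m n := by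
  rw [show ε i + δ k = (1:ℝ) • ε i + (1:ℝ) • δ k by module]
  exact mem_ed i k (Or.inl rfl) (Or.inl rfl)

lemma img_Pm {σ : Equiv.Perm (Fin m)} {τ : Equiv.Perm (Fin n)} {s : Fin m → ℝ}
    {t : Fin n → ℝ} (hs : ∀ i, Sg (s i)) (ht : ∀ k, Sg (t k)) :
    act σ τ s t '' Pm m n = {v | v ∈ Δroot m n ∧ 0 ≤ F s t v} := by
  rw [Pm_eq]
  refine act_image_F hs ht fun v => ?_
  rw [F_act]
  exact F_congr (funext fun i => Sg.sq (hs _)) (funext fun k => Sg.sq (ht _)) v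

lemma img_P1 {σ : Equiv.Perm (Fin m)} {τ : Equiv.Perm (Fin n)} {s : Fin m → ℝ}
    {t : Fin n → ℝ} (hs : ∀ i, Sg (s i)) (ht : ∀ k, Sg (t k)) :
    act σ τ s t '' P1 m n =
      {v | v ∈ Δroot m n ∧
        0 ≤ F (fun j => (if ((σ.symm j : Fin m) : ℕ) = 0 then (1:ℝ) else 0) * s j)
          (fun _ => (0:ℝ)) v} := by
  rw [P1_eq]
  refine act_image_F hs ht fun v => ?_
  rw [F_act]
  refine F_congr (funext fun i => ?_) (funext fun k => by simp) v
  simp only [Equiv.symm_apply_apply]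
  rw [mul_assoc, Sg.sq (hs _), mul_one]

end OspEven

open OspEven in
theorem stmt_7' (m n : ℕ) (hm : 2 ≤ m) (hn : 1 ≤ n)
    (P : Set (OspEven.V m n)) (hP : P ⊆ OspEven.Δroot m n) :
    (IsCominuscule (OspEven.Δroot m n) P ↔
      ∃ (σ : Equiv.Perm (Fin m)) (τ : Equiv.Perm (Fin n)) (s : Fin m → ℝ) (t : Fin n → ℝ),
        OspEven.InW σ τ s t ∧
        (OspEven.act σ τ s t '' P = OspEven.Pm m n ∨
         OspEven.act σ τ s t '' P = OspEven.P1 m n ∨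
         OspEven.act σ τ s t '' P = OspEven.Pmbar m n)) ∧
    (IsCominuscule (OspEven.Δroot m n) (OspEven.Pm m n) ∧
     IsCominuscule (OspEven.Δroot m n) (OspEven.P1 m n) ∧
     IsCominuscule (OspEven.Δroot m n) (OspEven.Pmbar m n)) ∧
    (¬ ∃ (σ : Equiv.Perm (Fin m)) (τ : Equiv.Perm (Fin n)) (s : Fin m → ℝ) (t : Fin n → ℝ),
        OspEven.InW σ τ s t ∧ OspEven.act σ τ s t '' OspEven.Pm m n = OspEven.P1 m n) ∧
    (¬ ∃ (σ : Equiv.Perm (Fin m)) (τ : Equiv.Perm (Fin n)) (s : Fin m → ℝ) (t : Fin n → ℝ),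
        OspEven.InW σ τ s t ∧ OspEven.act σ τ s t '' OspEven.Pm m n = OspEven.Pmbar m n) ∧
    (¬ ∃ (σ : Equiv.Perm (Fin m)) (τ : Equiv.Perm (Fin n)) (s : Fin m → ℝ) (t : Fin n → ℝ),
        OspEven.InW σ τ s t ∧ OspEven.act σ τ s t '' OspEven.P1 m n = OspEven.Pmbar m n) := by
  classical
  have hm0 : 0 < m := by omega
  refine ⟨?_, ⟨?_, ?_, ?_⟩, ?_, ?_, ?_⟩
  · -- the classification iff
    constructor
    · intro hcom
      rcases CLASS hn hcom with ⟨c, d, hc, hd, hPdesc⟩ | ⟨i₀, ζ, hζ, hPdesc⟩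
      · have hpc : (∏ i, c i) = 1 ∨ (∏ i, c i) = -1 := by
          refine Finset.prod_induction c (fun x => x = 1 ∨ x = -1) ?_ (Or.inl rfl)
            (fun i _ => hc i)
          rintro a b (rfl | rfl) (rfl | rfl) <;> norm_num
        rcases hpc with hpc | hpc
        · refine ⟨1, 1, c, d, ⟨hc, hd, hpc⟩, Or.inl ?_⟩
          rw [hPdesc, Pm_eq]
          refine act_image_F hc hd fun v => ?_
          rw [F_act]
          exact F_congr (funext fun i => by simp) (funext fun k => by simp) v
        · set s : Fin m → ℝ := fun i => c i * (if (i:ℕ) = m - 1 then (-1:ℝ) else 1)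
            with hs_def
          have hθsg : ∀ i : Fin m, Sg (if (i:ℕ) = m - 1 then (-1:ℝ) else 1) := fun i => by
            by_cases h : (i:ℕ) = m - 1
            · exact Or.inr (if_pos h)
            · exact Or.inl (if_neg h)
          have hs : ∀ i, Sg (s i) := fun i => (hc i).mul (hθsg i)
          refine ⟨1, 1, s, d, ⟨hs, hd, ?_⟩, Or.inr (Or.inr ?_)⟩
          · rw [hs_def]
            rw [Finset.prod_mul_distrib, hpc, prod_theta hm]
            norm_num
          · rw [hPdesc, Pmbar_eq]
            refine act_image_F hs hd fun v => ?_
            rw [F_act]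
            refine F_congr (funext fun i => ?_) (funext fun k => by simp) v
            simp only [hs_def, Equiv.Perm.coe_one, id_eq]
            by_cases h : (i:ℕ) = m - 1 <;> simp [h] <;> ring
      · obtain ⟨z0, hz0⟩ : ∃ z : Fin m, (z:ℕ) = 0 := ⟨⟨0, by omega⟩, rfl⟩
        obtain ⟨z1, hz1⟩ : ∃ z : Fin m, (z:ℕ) = 1 := ⟨⟨1, by omega⟩, rfl⟩
        have hz01 : z0 ≠ z1 := fun h => by
          rw [h, hz1] at hz0; exact absurd hz0 one_ne_zero
        set s : Fin m → ℝ := fun i => (if i = z0 then ζ else 1) * (if i = z1 then ζ else 1)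
          with hs_def
        have hsg1 : ∀ (w i : Fin m), Sg (if i = w then ζ else 1) := fun w i => by
          by_cases h : i = w
          · rw [if_pos h]; exact hζ
          · rw [if_neg h]; exact Or.inl rfl
        have hs : ∀ i, Sg (s i) := fun i => (hsg1 z0 i).mul (hsg1 z1 i)
        have hprod : (∏ i, s i) = 1 := by
          rw [hs_def]
          rw [Finset.prod_mul_distrib, Finset.prod_ite_eq', Finset.prod_ite_eq']
          simp [Sg.sq hζ]
        refine ⟨Equiv.swap i₀ z0, 1, s, 1, ⟨hs, fun k => Or.inl rfl, hprod⟩,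
          Or.inr (Or.inl ?_)⟩
        rw [hPdesc, P1_eq]
        refine act_image_F hs (fun k => Or.inl rfl) fun v => ?_
        rw [F_act]
        refine F_congr (funext fun i => ?_) (funext fun k => by simp) v
        by_cases hx : i = i₀
        · simp [hx, Equiv.swap_apply_left, hz0, hs_def, hz01]
        · have hσ : (Equiv.swap i₀ z0) i ≠ z0 := by
            intro h
            exact hx ((Equiv.swap i₀ z0).injective
              (h.trans (Equiv.swap_apply_left i₀ z0).symm))
          have h0 : ((Equiv.swap i₀ z0 i : Fin m) : ℕ) ≠ 0 :=
            fun h => hσ (Fin.ext (h.trans hz0.symm))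
          simp [hx, h0]
    · rintro ⟨σ, τ, s, t, ⟨hs, ht, -⟩, hcase | hcase | hcase⟩
      · have hPdesc : P = {v | v ∈ Δroot m n ∧
            0 ≤ F (fun _ => (1:ℝ)) (fun _ => (1:ℝ)) (act σ τ s t v)} := by
          ext v
          rw [mem_iff_of_image hs ht hcase v, Pm_eq]
          constructor
          · rintro ⟨h1, h2⟩; exact ⟨(act_mem_iff hs ht).mp h1, h2⟩
          · rintro ⟨h1, h2⟩; exact ⟨(act_mem_iff hs ht).mpr h1, h2⟩
        rw [hPdesc]
        refine cominuscule_phi (by norm_num : (0:ℝ) < 2) _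
          (fun u v => by rw [act_add, F_add]) (fun v => by rw [act_neg, F_neg])
          (fun v hv => val_Pm _ ((act_mem_iff hs ht).mpr hv)) ?_
        refine ⟨act σ.symm τ.symm (fun i => s (σ i)) (fun k => t (τ k))
          ((2:ℝ) • δ ⟨0, hn⟩), ?_, ?_⟩
        · exact act_mem (fun i => hs _) (fun k => ht _) (two_delta_mem _)
        · rw [act_rightinv hs ht]
          norm_num [F_neg, F_smul, F_delta]
      · have hPdesc : P = {v | v ∈ Δroot m n ∧
            0 ≤ F (fun i : Fin m => if (i:ℕ) = 0 then (1:ℝ) else 0) (fun _ => (0:ℝ))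
              (act σ τ s t v)} := by
          ext v
          rw [mem_iff_of_image hs ht hcase v, P1_eq]
          constructor
          · rintro ⟨h1, h2⟩; exact ⟨(act_mem_iff hs ht).mp h1, h2⟩
          · rintro ⟨h1, h2⟩; exact ⟨(act_mem_iff hs ht).mpr h1, h2⟩
        rw [hPdesc]
        refine cominuscule_phi one_pos _
          (fun u v => by rw [act_add, F_add]) (fun v => by rw [act_neg, F_neg])
          (fun v hv => val_P1 hm0 _ ((act_mem_iff hs ht).mpr hv)) ?_
        refine ⟨act σ.symm τ.symm (fun i => s (σ i)) (fun k => t (τ k))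
          (ε ⟨0, hm0⟩ + δ ⟨0, hn⟩), ?_, ?_⟩
        · exact act_mem (fun i => hs _) (fun k => ht _) (eps_delta_mem _ _)
        · rw [act_rightinv hs ht]
          norm_num [F_add, F_eps, F_delta]
      · have hPdesc : P = {v | v ∈ Δroot m n ∧
            0 ≤ F (fun i : Fin m => if (i:ℕ) = m - 1 then (-1:ℝ) else 1) (fun _ => (1:ℝ))
              (act σ τ s t v)} := by
          ext v
          rw [mem_iff_of_image hs ht hcase v, Pmbar_eq]
          constructor
          · rintro ⟨h1, h2⟩; exact ⟨(act_mem_iff hs ht).mp h1, h2⟩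
          · rintro ⟨h1, h2⟩; exact ⟨(act_mem_iff hs ht).mpr h1, h2⟩
        rw [hPdesc]
        refine cominuscule_phi (by norm_num : (0:ℝ) < 2) _
          (fun u v => by rw [act_add, F_add]) (fun v => by rw [act_neg, F_neg])
          (fun v hv => val_Pmbar _ ((act_mem_iff hs ht).mpr hv)) ?_
        refine ⟨act σ.symm τ.symm (fun i => s (σ i)) (fun k => t (τ k))
          ((2:ℝ) • δ ⟨0, hn⟩), ?_, ?_⟩
        · exact act_mem (fun i => hs _) (fun k => ht _) (two_delta_mem _)
        · rw [act_rightinv hs ht]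
          norm_num [F_neg, F_smul, F_delta]
  · -- Pm is cominuscule
    rw [Pm_eq]
    refine cominuscule_F (by norm_num : (0:ℝ) < 2) _ _ val_Pm
      ⟨(2:ℝ) • δ ⟨0, hn⟩, two_delta_mem _, by norm_num [F_neg, F_smul, F_delta]⟩
  · -- P1 is cominuscule
    rw [P1_eq]
    refine cominuscule_F one_pos _ _ (val_P1 hm0)
      ⟨ε ⟨0, hm0⟩ + δ ⟨0, hn⟩, eps_delta_mem _ _, by norm_num [F_add, F_eps, F_delta]⟩
  · -- Pmbar is cominuscule
    rw [Pmbar_eq]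
    refine cominuscule_F (by norm_num : (0:ℝ) < 2) _ _ val_Pmbar
      ⟨(2:ℝ) • δ ⟨0, hn⟩, two_delta_mem _, by norm_num [F_neg, F_smul, F_delta]⟩
  · -- Pm and P1 are not conjugate
    rintro ⟨σ, τ, s, t, ⟨hs, ht, hp⟩, heq⟩
    rw [img_Pm hs ht, P1_eq] at heq
    have huΔ : (-(t ⟨0, hn⟩)) • ((2:ℝ) • δ ⟨0, hn⟩) ∈ Δroot m n := mem_2d _ (Sg.neg (ht _))
    have hu2 : (-(t ⟨0, hn⟩)) • ((2:ℝ) • δ ⟨0, hn⟩) ∈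
        {v | v ∈ Δroot m n ∧ 0 ≤ F (fun i : Fin m => if (i:ℕ) = 0 then (1:ℝ) else 0)
          (fun _ => (0:ℝ)) v} := ⟨huΔ, by norm_num [F_neg, F_smul, F_delta]⟩
    rw [← heq] at hu2
    obtain ⟨-, hle⟩ := hu2
    rcases ht ⟨0, hn⟩ with h | h <;> norm_num [F_neg, F_smul, F_delta, h] at hle
  · -- Pm and Pmbar are not conjugate
    rintro ⟨σ, τ, s, t, ⟨hs, ht, hp⟩, heq⟩
    rw [img_Pm hs ht, Pmbar_eq] at heq
    have hiff : ∀ v ∈ Δroot m n, (0 ≤ F s t v ↔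
        0 ≤ F (fun i : Fin m => if (i:ℕ) = m - 1 then (-1:ℝ) else 1) (fun _ => (1:ℝ)) v) := by
      intro v hv
      constructor
      · intro h; exact ((Set.ext_iff.mp heq v).mp ⟨hv, h⟩).2
      · intro h; exact ((Set.ext_iff.mp heq v).mpr ⟨hv, h⟩).2
    have ht0 : t ⟨0, hn⟩ = 1 := by
      rcases ht ⟨0, hn⟩ with h | h
      · exact h
      · exfalso
        have hrhs : (0:ℝ) ≤ F (fun i : Fin m => if (i:ℕ) = m - 1 then (-1:ℝ) else 1)
            (fun _ => (1:ℝ)) ((-(t ⟨0, hn⟩)) • ((2:ℝ) • δ ⟨0, hn⟩)) := by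
          norm_num [F_neg, F_smul, F_delta, h]
        have hu := (hiff _ (mem_2d (⟨0, hn⟩ : Fin n) (Sg.neg (ht _)))).mpr hrhs
        norm_num [F_neg, F_smul, F_delta, h] at hu
    have hseq : ∀ i, s i = (if (i:ℕ) = m - 1 then (-1:ℝ) else 1) := by
      intro i
      have hvΔ : (1:ℝ) • ε i + (-1:ℝ) • δ ⟨0, hn⟩ ∈ Δroot m n :=
        mem_ed _ _ (Or.inl rfl) (Or.inr rfl)
      have hiffi := hiff _ hvΔ
      rcases hs i with h | h <;> by_cases hcm : (i:ℕ) = m - 1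
      · rw [if_pos hcm]
        exfalso
        norm_num [F_add, F_smul, F_neg, F_eps, F_delta, h, ht0, hcm] at hiffi
      · rw [if_neg hcm]; exact h
      · rw [if_pos hcm]; exact h
      · rw [if_neg hcm]
        exfalso
        norm_num [F_add, F_smul, F_neg, F_eps, F_delta, h, ht0, hcm] at hiffi
    have hps : (∏ i, s i) = -1 := by
      rw [Finset.prod_congr rfl fun i _ => hseq i]
      exact prod_theta hm
    rw [hp] at hps
    norm_num at hps
  · -- P1 and Pmbar are not conjugate
    rintro ⟨σ, τ, s, t, ⟨hs, ht, hp⟩, heq⟩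
    rw [img_P1 hs ht, Pmbar_eq] at heq
    have huΔ : (-1:ℝ) • ((2:ℝ) • δ ⟨0, hn⟩) ∈ Δroot m n := mem_2d _ (Or.inr rfl)
    have hu2 : (-1:ℝ) • ((2:ℝ) • δ ⟨0, hn⟩) ∈
        {v | v ∈ Δroot m n ∧
          0 ≤ F (fun j => (if ((σ.symm j : Fin m) : ℕ) = 0 then (1:ℝ) else 0) * s j)
            (fun _ => (0:ℝ)) v} := ⟨huΔ, by norm_num [F_neg, F_smul, F_delta]⟩
    rw [heq] at hu2
    obtain ⟨-, hle⟩ := hu2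
    norm_num [F_neg, F_smul, F_delta] at hle

theorem stmt_7 (m n : ℕ) (hm : 2 ≤ m) (hn : 1 ≤ n)
    (P : Set (OspEven.V m n)) (hP : P ⊆ OspEven.Δroot m n) :
    (IsCominuscule (OspEven.Δroot m n) P ↔
      ∃ (σ : Equiv.Perm (Fin m)) (τ : Equiv.Perm (Fin n)) (s : Fin m → ℝ) (t : Fin n → ℝ),
        OspEven.InW σ τ s t ∧
        (OspEven.act σ τ s t '' P = OspEven.Pm m n ∨
         OspEven.act σ τ s t '' P = OspEven.P1 m n ∨
         OspEven.act σ τ s t '' P = OspEven.Pmbar m n)) ∧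
    (IsCominuscule (OspEven.Δroot m n) (OspEven.Pm m n) ∧
     IsCominuscule (OspEven.Δroot m n) (OspEven.P1 m n) ∧
     IsCominuscule (OspEven.Δroot m n) (OspEven.Pmbar m n)) ∧
    (¬ ∃ (σ : Equiv.Perm (Fin m)) (τ : Equiv.Perm (Fin n)) (s : Fin m → ℝ) (t : Fin n → ℝ),
        OspEven.InW σ τ s t ∧ OspEven.act σ τ s t '' OspEven.Pm m n = OspEven.P1 m n) ∧
    (¬ ∃ (σ : Equiv.Perm (Fin m)) (τ : Equiv.Perm (Fin n)) (s : Fin m → ℝ) (t : Fin n → ℝ),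
        OspEven.InW σ τ s t ∧ OspEven.act σ τ s t '' OspEven.Pm m n = OspEven.Pmbar m n) ∧
    (¬ ∃ (σ : Equiv.Perm (Fin m)) (τ : Equiv.Perm (Fin n)) (s : Fin m → ℝ) (t : Fin n → ℝ),
        OspEven.InW σ τ s t ∧ OspEven.act σ τ s t '' OspEven.P1 m n = OspEven.Pmbar m n) := by
  exact stmt_7' m n hm hn P hP
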